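/- arXiv:0709.2564 — 6 statements merged into one kernel-verified Lean document; each statement's English description precedes it below -/
import Mathlib

section
/- Every monotonic probability measure μ on [0,1] can be uniquely represented as a weighted sum of the Dirac measure at 0 and a measure absolutely continuous with respect to Lebesgue measure whose density has a monotone non-increasing representative. -/
open MeasureTheory Set Metric Filter
open scoped ENNReal NNReal Topology

/-- A probability measure on `[0,1]` is *monotonic* if `μ(A) ≥ μ((A+x) ∩ [0,1])`
for every interval `A ⊆ [0,1]` and every `x ∈ [0,1]`. -/
def MonotonicMeasure (μ : Measure ℝ) : Prop :=
  ∀ a b : ℝ, Set.Icc a b ⊆ Set.Icc 0 1 →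
    ∀ x ∈ Set.Icc (0:ℝ) 1,
      μ ((fun y => y + x) '' Set.Icc a b ∩ Set.Icc 0 1) ≤ μ (Set.Icc a b)

section Aux
variable {μ : Measure ℝ}

lemma translate_le (hmono : MonotonicMeasure μ) {c d t : ℝ}
    (hc : 0 ≤ c) (hd : d ≤ 1) (ht0 : 0 ≤ t) (ht1 : t ≤ 1) :
    μ (Icc (c + t) (d + t) ∩ Icc 0 1) ≤ μ (Icc c d) := by
  have h := hmono c d (fun y hy => ⟨hc.trans hy.1, hy.2.trans hd⟩) t ⟨ht0, ht1⟩
  rwa [Set.image_add_const_Icc] at h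

lemma singleton_mono (hmono : MonotonicMeasure μ) {s t : ℝ}
    (hs : 0 ≤ s) (hst : s ≤ t) (ht : t ≤ 1) : μ {t} ≤ μ {s} := by
  have h := translate_le hmono (c := s) (d := s) (t := t - s) hs (hst.trans ht)
    (by linarith) (by linarith)
  have e : s + (t - s) = t := by ring
  rw [e, Icc_self, Icc_self] at h
  have : ({t} : Set ℝ) ∩ Icc 0 1 = {t} := by
    rw [inter_eq_self_of_subset_left (singleton_subset_iff.2 (Set.mem_Icc.2 ⟨hs.trans hst, ht⟩))]
  rwa [this] at h

lemma no_atom [IsProbabilityMeasure μ] (hsupp : μ ((Set.Icc (0:ℝ) 1)ᶜ) = 0)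
    (hmono : MonotonicMeasure μ) {t : ℝ} (ht : 0 < t) : μ {t} = 0 := by
  by_cases h1 : t ≤ 1
  · by_contra hne
    set sq : ℕ → ℝ := fun n => t / (n + 2) with hsq
    have hanti : StrictAnti sq := by
      intro m n hmn
      have hmn' : (m:ℝ) < n := by exact_mod_cast hmn
      exact div_lt_div_of_pos_left ht (by positivity) (by linarith)
    have hd : Pairwise (Function.onFun Disjoint fun n => ({sq n} : Set ℝ)) := by
      intro m n hmn
      simp only [Function.onFun, Set.disjoint_singleton]
      exact hanti.injective.ne hmn
    have hbound : ∀ n, μ {t} ≤ μ {sq n} := by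
      intro n
      refine singleton_mono hmono (by positivity) ?_ h1
      have : (0:ℝ) ≤ n := Nat.cast_nonneg n
      exact div_le_self ht.le (by linarith)
    have htop : (⊤ : ℝ≥0∞) ≤ μ (⋃ n, ({sq n} : Set ℝ)) := by
      rw [measure_iUnion hd fun n => measurableSet_singleton _]
      calc (⊤ : ℝ≥0∞) = ∑' _ : ℕ, μ {t} := (ENNReal.tsum_const_eq_top_of_ne_zero hne).symm
        _ ≤ ∑' n, μ {sq n} := ENNReal.tsum_le_tsum hbound
    have := htop.trans prob_le_one
    simp at this
  · have : ({t} : Set ℝ) ⊆ (Set.Icc (0:ℝ) 1)ᶜ := by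
      intro y hy
      simp only [mem_singleton_iff] at hy
      subst hy
      simp only [mem_compl_iff, mem_Icc, not_and, not_le]
      intro _; linarith
    exact le_antisymm ((measure_mono this).trans hsupp.le) zero_le

end Aux

section Aux2
variable {μ : Measure ℝ}

lemma ball_count [IsProbabilityMeasure μ] (hsupp : μ ((Set.Icc (0:ℝ) 1)ᶜ) = 0)
    (hmono : MonotonicMeasure μ) {x r : ℝ} (hx1 : x ≤ 1)
    (hr : 0 < r) {n : ℕ} (h : 2 * r * (n + 1) ≤ x - r) :
    (n : ℝ≥0∞) * μ (Icc (x - r) (x + r) ∩ Icc 0 1) ≤ 1 := by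
  set K : ℕ → Set ℝ := fun j => Ioc (x - r - 2*r*((j:ℝ)+1)) (x + r - 2*r*((j:ℝ)+1)) with hK
  have hstep : ∀ j : ℕ, j < n → μ (Icc (x - r) (x + r) ∩ Icc 0 1) ≤ μ (K j) := by
    intro j hj
    have hj' : (j:ℝ) + 1 ≤ n := by exact_mod_cast hj
    have hn1 : (0:ℝ) ≤ (n:ℝ) := Nat.cast_nonneg n
    have hjnn : (0:ℝ) ≤ (j:ℝ) := Nat.cast_nonneg j
    have hc : 2*r ≤ x - r - 2*r*((j:ℝ)+1) := by nlinarith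
    have h2 := translate_le hmono (c := x - r - 2*r*((j:ℝ)+1)) (d := x + r - 2*r*((j:ℝ)+1))
      (t := 2*r*((j:ℝ)+1)) (by nlinarith) (by nlinarith) (by positivity) (by nlinarith)
    have e1 : x - r - 2*r*((j:ℝ)+1) + 2*r*((j:ℝ)+1) = x - r := by ring
    have e2 : x + r - 2*r*((j:ℝ)+1) + 2*r*((j:ℝ)+1) = x + r := by ring
    rw [e1, e2] at h2
    refine h2.trans ?_
    have hcd : Icc (x - r - 2*r*((j:ℝ)+1)) (x + r - 2*r*((j:ℝ)+1)) ⊆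
        {x - r - 2*r*((j:ℝ)+1)} ∪ K j := by
      intro y hy
      rcases eq_or_lt_of_le hy.1 with hh | hh
      · exact Or.inl (by simp [hh.symm])
      · exact Or.inr ⟨hh, hy.2⟩
    calc μ (Icc (x - r - 2*r*((j:ℝ)+1)) (x + r - 2*r*((j:ℝ)+1)))
        ≤ μ {x - r - 2*r*((j:ℝ)+1)} + μ (K j) :=
          (measure_mono hcd).trans (measure_union_le _ _)
      _ = μ (K j) := by
          rw [no_atom hsupp hmono (by nlinarith : (0:ℝ) < x - r - 2*r*((j:ℝ)+1)), zero_add]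
  have key : ∀ i j : ℕ, i < j → Disjoint (K i) (K j) := by
    intro i j hij
    have hij' : (i:ℝ) + 1 ≤ j := by exact_mod_cast hij
    apply Set.Ioc_disjoint_Ioc.2
    have hle : x + r - 2*r*((j:ℝ)+1) ≤ x - r - 2*r*((i:ℝ)+1) := by nlinarith
    exact (min_le_right _ _).trans (hle.trans (le_max_left _ _))
  have hdisj : (↑(Finset.range n) : Set ℕ).PairwiseDisjoint K := by
    intro i _ j _ hij
    rcases lt_or_gt_of_ne hij with hh | hh
    · exact key i j hh
    · exact (key j i hh).symm
  calc (n : ℝ≥0∞) * μ (Icc (x - r) (x + r) ∩ Icc 0 1)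
      = ∑ _j ∈ Finset.range n, μ (Icc (x - r) (x + r) ∩ Icc 0 1) := by
        simp [Finset.sum_const, nsmul_eq_mul]
    _ ≤ ∑ j ∈ Finset.range n, μ (K j) :=
        Finset.sum_le_sum fun j hj => hstep j (Finset.mem_range.1 hj)
    _ = μ (⋃ j ∈ Finset.range n, K j) :=
        (measure_biUnion_finset hdisj fun j _ => measurableSet_Ioc).symm
    _ ≤ 1 := prob_le_one

end Aux2

section Aux3
variable {μ : Measure ℝ}

lemma ball_le [IsProbabilityMeasure μ] (hsupp : μ ((Set.Icc (0:ℝ) 1)ᶜ) = 0)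
    (hmono : MonotonicMeasure μ) {ε x r : ℝ}
    (hx : ε < x) (hx1 : x ≤ 1) (hr : 0 < r) (hr2 : r ≤ ε/16) :
    μ (closedBall x r) ≤ ENNReal.ofReal (8/ε) * volume (closedBall x r) := by
  have hε : 0 < ε := by nlinarith
  set n := ⌊ε/(8*r)⌋₊ with hn
  have hεr : (2:ℝ) ≤ ε/(8*r) := by rw [le_div_iff₀ (by positivity)]; nlinarith
  have hfl : (n:ℝ) ≤ ε/(8*r) := Nat.floor_le (by positivity)
  have hfl2 : ε/(8*r) - 1 < (n:ℝ) := Nat.sub_one_lt_floor _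
  have hcond : 2*r*((n:ℝ)+1) ≤ x - r := by
    have h1 : 2*r*((n:ℝ)+1) ≤ 2*r*(ε/(8*r)+1) := by nlinarith
    have h2 : 2*r*(ε/(8*r)+1) = ε/4 + 2*r := by field_simp; ring
    nlinarith
  have hb := ball_count hsupp hmono hx1 hr hcond
  have h1 : μ (closedBall x r) ≤ μ (Icc (x-r) (x+r) ∩ Icc 0 1) := by
    rw [Real.closedBall_eq_Icc]
    calc μ (Icc (x-r) (x+r))
        ≤ μ ((Icc (x-r) (x+r) ∩ Icc 0 1) ∪ (Icc (0:ℝ) 1)ᶜ) := measure_mono (by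
          intro y hy
          by_cases h : y ∈ Icc (0:ℝ) 1
          exacts [Or.inl ⟨hy, h⟩, Or.inr h])
      _ ≤ μ (Icc (x-r) (x+r) ∩ Icc 0 1) + μ ((Icc (0:ℝ) 1)ᶜ) := measure_union_le _ _
      _ = μ (Icc (x-r) (x+r) ∩ Icc 0 1) := by rw [hsupp, add_zero]
  have hm : μ (Icc (x-r) (x+r) ∩ Icc 0 1) ≤ (↑n)⁻¹ :=
    ENNReal.le_inv_iff_mul_le.2 (by rwa [mul_comm])
  have hnge : ENNReal.ofReal (ε/(16*r)) ≤ (n : ℝ≥0∞) := by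
    rw [← ENNReal.ofReal_natCast]
    refine ENNReal.ofReal_le_ofReal ?_
    have hge1 : (1:ℝ) ≤ ε/(16*r) := by rw [le_div_iff₀ (by positivity)]; nlinarith
    have : ε/(16*r) ≤ ε/(8*r) - 1 := by
      rw [div_sub' (by positivity), div_le_div_iff₀ (by positivity) (by positivity)]
      nlinarith
    linarith
  have h3 : ((n:ℝ≥0∞))⁻¹ ≤ ENNReal.ofReal (8/ε) * volume (closedBall x r) := by
    rw [Real.volume_closedBall]
    calc ((n:ℝ≥0∞))⁻¹ ≤ (ENNReal.ofReal (ε/(16*r)))⁻¹ := ENNReal.inv_le_inv.2 hnge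
      _ = ENNReal.ofReal ((ε/(16*r))⁻¹) := (ENNReal.ofReal_inv_of_pos (by positivity)).symm
      _ = ENNReal.ofReal (8/ε) * ENNReal.ofReal (2*r) := by
          rw [← ENNReal.ofReal_mul (by positivity : (0:ℝ) ≤ 8/ε)]
          rw [inv_div]
          congr 1
          field_simp
          ring
  exact h1.trans (hm.trans h3)

end Aux3

section Aux4
variable {μ : Measure ℝ}

lemma slice_null [IsProbabilityMeasure μ] (hsupp : μ ((Set.Icc (0:ℝ) 1)ᶜ) = 0)
    (hmono : MonotonicMeasure μ) {ε : ℝ} (hε : 0 < ε)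
    {s : Set ℝ} (hs : volume s = 0) : μ (s ∩ Ioc ε 1) = 0 := by
  set s' := s ∩ Ioc ε 1 with hs'
  have hvol : volume s' = 0 :=
    le_antisymm (hs ▸ measure_mono inter_subset_left) zero_le
  set C := ENNReal.ofReal (8/ε) with hC
  have hkey : ∀ δ : ℝ≥0∞, δ ≠ 0 → μ s' ≤ C * δ := by
    intro δ hδ
    obtain ⟨t, rad, t_count, ts, hrad, hcover, htsum⟩ :=
      Besicovitch.exists_closedBall_covering_tsum_measure_le (volume : Measure ℝ) hδ
        (fun _ => Ioc 0 (ε/16)) s'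
        (fun x _ δ' hδ' => ⟨min (ε/16) (δ'/2),
          ⟨⟨lt_min (by positivity) (by positivity), min_le_left _ _⟩,
           ⟨lt_min (by positivity) (by positivity), (min_le_right _ _).trans_lt (by linarith)⟩⟩⟩)
    calc μ s' ≤ μ (⋃ x ∈ t, closedBall x (rad x)) := measure_mono hcover
      _ ≤ ∑' x : t, μ (closedBall (x:ℝ) (rad (x:ℝ))) := measure_biUnion_le μ t_count _
      _ ≤ ∑' x : t, C * volume (closedBall (x:ℝ) (rad (x:ℝ))) := ENNReal.tsum_le_tsum (fun x => by
          have hx := ts x.2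
          exact ball_le hsupp hmono hx.2.1 hx.2.2 (hrad x x.2).1 (hrad x x.2).2)
      _ = C * ∑' x : t, volume (closedBall (x:ℝ) (rad (x:ℝ))) := ENNReal.tsum_mul_left
      _ ≤ C * (volume s' + δ) := mul_le_mul_right htsum _
      _ = C * δ := by rw [hvol, zero_add]
  have hC_ne_top : C ≠ ⊤ := ENNReal.ofReal_ne_top
  have hlim : Tendsto (fun δ : ℝ≥0∞ => C * δ) (𝓝[>] 0) (𝓝 0) := by
    have h0 : Tendsto (id : ℝ≥0∞ → ℝ≥0∞) (𝓝[>] (0:ℝ≥0∞)) (𝓝 (0:ℝ≥0∞)) :=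
      tendsto_id.mono_left nhdsWithin_le_nhds
    simpa using ENNReal.Tendsto.const_mul h0 (Or.inr hC_ne_top)
  have hev : ∀ᶠ δ in 𝓝[>] (0:ℝ≥0∞), μ s' ≤ C * δ :=
    eventually_mem_nhdsWithin.mono fun δ hδ => hkey δ (ne_of_gt hδ)
  exact le_antisymm (ge_of_tendsto hlim hev) zero_le

lemma mu_ac [IsProbabilityMeasure μ] (hsupp : μ ((Set.Icc (0:ℝ) 1)ᶜ) = 0)
    (hmono : MonotonicMeasure μ) : μ.restrict ({0}ᶜ) ≪ (volume : Measure ℝ) := by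
  intro s hs
  rw [Measure.restrict_apply' (measurableSet_singleton 0).compl]
  have hcover : s ∩ {0}ᶜ ⊆ (⋃ n : ℕ, s ∩ Ioc (1/((n:ℝ)+1)) 1) ∪ (Icc (0:ℝ) 1)ᶜ := by
    rintro y ⟨hys, hy0⟩
    simp only [mem_compl_iff, mem_singleton_iff] at hy0
    by_cases hyI : y ∈ Icc (0:ℝ) 1
    · have hy0' : 0 < y := lt_of_le_of_ne hyI.1 (Ne.symm hy0)
      obtain ⟨n, hn⟩ := exists_nat_one_div_lt hy0'
      exact Or.inl (mem_iUnion.2 ⟨n, hys, hn, hyI.2⟩)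
    · exact Or.inr hyI
  have hzero : ∀ n : ℕ, μ (s ∩ Ioc (1/((n:ℝ)+1)) 1) = 0 := fun n =>
    slice_null hsupp hmono (by positivity) hs
  refine le_antisymm ?_ zero_le
  calc μ (s ∩ {0}ᶜ) ≤ μ (⋃ n : ℕ, s ∩ Ioc (1/((n:ℝ)+1)) 1) + μ ((Icc (0:ℝ) 1)ᶜ) :=
        (measure_mono hcover).trans (measure_union_le _ _)
    _ ≤ (∑' n : ℕ, μ (s ∩ Ioc (1/((n:ℝ)+1)) 1)) + 0 := by
        rw [hsupp]
        exact add_le_add_left (measure_iUnion_le _) _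
    _ ≤ 0 := by
        rw [add_zero]
        have h0 : ∑' n : ℕ, μ (s ∩ Ioc (1/((n:ℝ)+1)) 1) = 0 := by
          simp only [hzero, tsum_zero]
        rw [h0]

end Aux4
theorem stmt1 (μ : Measure ℝ) [IsProbabilityMeasure μ]
    (hsupp : μ ((Set.Icc (0:ℝ) 1)ᶜ) = 0)
    (hmono : MonotonicMeasure μ) :
    ∃! p : ENNReal × Measure ℝ,
      μ = p.1 • Measure.dirac (0:ℝ) + p.2 ∧ p.2 ≪ volume ∧
      ∃ f : ℝ → ENNReal, p.2 = volume.withDensity f ∧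
        AntitoneOn f (Set.Ioi 0) ∧ ∀ x, x ∉ Set.Icc (0:ℝ) 1 → f x = 0 := by
  classical
  have hAC : μ.restrict ({0}ᶜ) ≪ (volume : Measure ℝ) := mu_ac hsupp hmono
  set μ' : Measure ℝ := μ.restrict ({0}ᶜ) with hμ'def
  haveI : IsFiniteMeasure μ' := inferInstanceAs (IsFiniteMeasure (μ.restrict {0}ᶜ))
  have hdecomp : μ = μ {0} • Measure.dirac (0:ℝ) + μ' := by
    rw [hμ'def, ← Measure.restrict_singleton]
    exact (Measure.restrict_add_restrict_compl (measurableSet_singleton 0)).symm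
  set g : ℝ → ℝ≥0∞ := μ'.rnDeriv volume with hgdef
  have hg_meas : Measurable g := Measure.measurable_rnDeriv _ _
  have hwd : volume.withDensity g = μ' := Measure.withDensity_rnDeriv_eq _ _ hAC
  have hμ'app : ∀ E : Set ℝ, μ' E = μ (E ∩ {0}ᶜ) := fun E =>
    Measure.restrict_apply' (measurableSet_singleton 0).compl
  set S : Set ℝ := {x | 0 < x ∧ x ≤ 1 ∧
    Tendsto (fun r => μ' (closedBall x r) / volume (closedBall x r)) (𝓝[>] 0) (𝓝 (g x))}
    with hSdef
  have hSmono : ∀ s ∈ S, ∀ t ∈ S, s ≤ t → g t ≤ g s := by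
    rintro s ⟨hs0, hs1, hsT⟩ t ⟨ht0, ht1, htT⟩ hst
    rcases eq_or_lt_of_le hst with rfl | hlt
    · exact le_rfl
    refine le_of_tendsto_of_tendsto htT hsT ?_
    have hmem : Ioo (0:ℝ) (min s (t - s)) ∈ 𝓝[>] (0:ℝ) :=
      Ioo_mem_nhdsGT_of_mem ⟨le_rfl, lt_min hs0 (by linarith)⟩
    filter_upwards [hmem] with r hr
    have hr0 : 0 < r := hr.1
    have hrs : r < s := lt_of_lt_of_le hr.2 (min_le_left _ _)
    have hrts : r < t - s := lt_of_lt_of_le hr.2 (min_le_right _ _)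
    have hball : μ' (closedBall t r) ≤ μ' (closedBall s r) := by
      rw [hμ'app, hμ'app, Real.closedBall_eq_Icc, Real.closedBall_eq_Icc]
      have h1 : Icc (t-r) (t+r) ∩ {0}ᶜ ⊆ (Icc (t-r) (t+r) ∩ Icc 0 1) ∪ (Icc (0:ℝ) 1)ᶜ := by
        rintro y ⟨hy, _⟩
        by_cases h : y ∈ Icc (0:ℝ) 1
        exacts [Or.inl ⟨hy, h⟩, Or.inr h]
      have h2 : μ (Icc (t-r) (t+r) ∩ Icc 0 1) ≤ μ (Icc (s-r) (s+r)) := by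
        have h := translate_le hmono (c := s - r) (d := s + r) (t := t - s)
          (by linarith) (by linarith) (by linarith) (by linarith)
        have e1 : s - r + (t - s) = t - r := by ring
        have e2 : s + r + (t - s) = t + r := by ring
        rwa [e1, e2] at h
      have h3 : Icc (s-r) (s+r) ∩ {0}ᶜ = Icc (s-r) (s+r) :=
        inter_eq_self_of_subset_left (fun y hy => by
          simp only [mem_compl_iff, mem_singleton_iff]
          have := hy.1
          intro h0
          rw [h0] at this
          linarith)
      calc μ (Icc (t-r) (t+r) ∩ {0}ᶜ)
          ≤ μ (Icc (t-r) (t+r) ∩ Icc 0 1) + μ ((Icc (0:ℝ) 1)ᶜ) :=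
            (measure_mono h1).trans (measure_union_le _ _)
        _ = μ (Icc (t-r) (t+r) ∩ Icc 0 1) := by rw [hsupp, add_zero]
        _ ≤ μ (Icc (s-r) (s+r)) := h2
        _ = μ (Icc (s-r) (s+r) ∩ {0}ᶜ) := by rw [h3]
    have hv : volume (closedBall t r) = volume (closedBall s r) := by
      rw [Real.volume_closedBall, Real.volume_closedBall]
    rw [hv]
    exact ENNReal.div_le_div_right hball _
  set f : ℝ → ℝ≥0∞ := fun x =>
    if 0 < x ∧ x ≤ 1 then ⨆ (y : ℝ) (_ : y ∈ S) (_ : x ≤ y), g y else 0 with hfdef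
  have hf_supp : ∀ x, x ∉ Icc (0:ℝ) 1 → f x = 0 := by
    intro x hx
    have hn : ¬ (0 < x ∧ x ≤ 1) := fun h => hx ⟨h.1.le, h.2⟩
    simp only [hfdef, if_neg hn]
  have hf_anti : AntitoneOn f (Ioi 0) := by
    intro a ha b hb hab
    by_cases hb1 : b ≤ 1
    · have ha1 : a ≤ 1 := hab.trans hb1
      simp only [hfdef, if_pos (And.intro (mem_Ioi.1 hb) hb1),
        if_pos (And.intro (mem_Ioi.1 ha) ha1)]
      refine iSup_le fun y => iSup_le fun hy => iSup_le fun hby => ?_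
      exact le_iSup_of_le y (le_iSup_of_le hy (le_iSup_of_le (hab.trans hby) le_rfl))
    · have hfb : f b = 0 := by
        have hn : ¬ (0 < b ∧ b ≤ 1) := fun h => hb1 h.2
        simp only [hfdef, if_neg hn]
      rw [hfb]
      exact zero_le
  have h1 : ∀ᵐ x ∂(volume : Measure ℝ), x ∈ (Ioc (0:ℝ) 1)ᶜ → g x = 0 := by
    have hint : ∫⁻ x in (Ioc (0:ℝ) 1)ᶜ, g x ∂volume = 0 := by
      rw [← withDensity_apply _ measurableSet_Ioc.compl, hwd, hμ'app]
      refine le_antisymm ((measure_mono ?_).trans hsupp.le) zero_le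
      rintro y ⟨hy1, hy2⟩
      simp only [mem_compl_iff, mem_Ioc, not_and, not_le] at hy1
      simp only [mem_compl_iff, mem_singleton_iff] at hy2
      simp only [mem_compl_iff, mem_Icc, not_and, not_le]
      intro h0
      exact hy1 (lt_of_le_of_ne h0 (Ne.symm hy2))
    exact (setLIntegral_eq_zero_iff measurableSet_Ioc.compl hg_meas).1 hint
  have hBes := Besicovitch.ae_tendsto_rnDeriv μ' (volume : Measure ℝ)
  have hf_ae : f =ᵐ[(volume : Measure ℝ)] g := by
    filter_upwards [hBes, h1] with x hx h1x
    by_cases hx01 : 0 < x ∧ x ≤ 1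
    · have hxS : x ∈ S := ⟨hx01.1, hx01.2, hx⟩
      simp only [hfdef, if_pos hx01]
      refine le_antisymm ?_ ?_
      · exact iSup_le fun y => iSup_le fun hy => iSup_le fun hxy => hSmono x hxS y hy hxy
      · exact le_iSup_of_le x (le_iSup_of_le hxS (le_iSup_of_le le_rfl le_rfl))
    · have hxU : x ∈ (Ioc (0:ℝ) 1)ᶜ := by
        simp only [mem_compl_iff, mem_Ioc]
        exact hx01
      simp only [hfdef, if_neg hx01, h1x hxU]
  have hwdf : volume.withDensity f = μ' := by rw [withDensity_congr_ae hf_ae, hwd]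
  refine ⟨(μ {0}, volume.withDensity f), ⟨?_, withDensity_absolutelyContinuous _ _,
    f, rfl, hf_anti, hf_supp⟩, ?_⟩
  · rw [hwdf]; exact hdecomp
  · rintro ⟨q1, ν⟩ ⟨hq1, hν, fq, rfl, hfq1, hfq2⟩
    have hν0 : volume.withDensity fq {0} = 0 := by
      rw [withDensity_apply _ (measurableSet_singleton 0)]
      exact setLIntegral_measure_zero _ _ Real.volume_singleton
    have hq1' : q1 = μ {0} := by
      have h := congrArg (fun m : Measure ℝ => m {0}) hq1
      simp only [Measure.add_apply, Measure.smul_apply, smul_eq_mul] at h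
      rw [Measure.dirac_apply' _ (measurableSet_singleton 0)] at h
      simp [hν0] at h
      exact h.symm
    have hμ0_ne : μ {0} ≠ ⊤ := measure_ne_top μ _
    have hνeq : volume.withDensity fq = volume.withDensity f := by
      ext s hs
      have e1 := congrArg (fun m : Measure ℝ => m s) hq1
      have e2 := congrArg (fun m : Measure ℝ => m s) hdecomp
      simp only [Measure.add_apply, Measure.smul_apply, smul_eq_mul] at e1 e2
      rw [hq1'] at e1
      rw [hwdf]
      have hne : μ {0} * Measure.dirac (0:ℝ) s ≠ ⊤ :=
        ENNReal.mul_ne_top hμ0_ne (measure_ne_top _ _)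
      exact (ENNReal.add_right_inj hne).1 (e1.symm.trans e2)
    simp only [Prod.mk.injEq]
    exact ⟨hq1', hνeq⟩
end

section
/- The restriction of a monotonic probability measure μ on [0,1] to any interval [b,1] with b ∈ (0,1) is absolutely continuous with respect to Lebesgue measure. -/
open MeasureTheory Set
open scoped ENNReal NNReal

/-- Core estimate: an interval `[p,q] ⊆ [b,1]` has `μ`-measure at most `s/b`
for any `s > q - p`, obtained by fitting `⌊b/s⌋ + 1` disjoint left-translates
of `[p,q]` inside `[0,1]`. -/
lemma key_interval_bound (μ : Measure ℝ) [IsProbabilityMeasure μ]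
    (hmono : MonotonicMeasure μ) (b : ℝ) (hb0 : 0 < b) (hb1 : b ≤ 1)
    {p q s : ℝ} (hbp : b ≤ p) (hpq : p ≤ q) (hq1 : q ≤ 1) (hs : q - p < s) :
    μ (Set.Icc p q) ≤ ENNReal.ofReal (s / b) := by
  have hs0 : 0 < s := lt_of_le_of_lt (by linarith) hs
  set n : ℕ := ⌊b / s⌋₊ with hn
  have hns : (n : ℝ) * s ≤ b := by
    have h1 : (n : ℝ) ≤ b / s := Nat.floor_le (le_of_lt (div_pos hb0 hs0))
    calc (n : ℝ) * s ≤ (b / s) * s := by nlinarith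
      _ = b := by field_simp
  have hlt : b < ((n : ℝ) + 1) * s := by
    have h1 : b / s < (n : ℝ) + 1 := Nat.lt_floor_add_one (b / s)
    calc b = (b / s) * s := by field_simp
      _ < ((n : ℝ) + 1) * s := by nlinarith
  -- the translated intervals
  set F : ℕ → Set ℝ := fun k => Set.Icc (p - k * s) (q - k * s) with hF
  -- each translate has measure at least μ (Icc p q)
  have claim1 : ∀ k ∈ Finset.range (n + 1), μ (Set.Icc p q) ≤ μ (F k) := by
    intro k hk
    have hkn : (k : ℝ) ≤ n := by
      exact_mod_cast Nat.lt_succ_iff.mp (Finset.mem_range.mp hk)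
    have hks0 : 0 ≤ (k : ℝ) * s := by positivity
    have hksb : (k : ℝ) * s ≤ b := by nlinarith
    have hx : (k : ℝ) * s ∈ Set.Icc (0:ℝ) 1 := ⟨hks0, by linarith⟩
    have hsub : Set.Icc (p - k * s) (q - k * s) ⊆ Set.Icc (0:ℝ) 1 := by
      apply Set.Icc_subset_Icc <;> linarith
    have := hmono (p - k * s) (q - k * s) hsub ((k : ℝ) * s) hx
    have himg : (fun y => y + (k : ℝ) * s) '' Set.Icc (p - k * s) (q - k * s)
        = Set.Icc p q := by
      rw [Set.image_add_const_Icc]; ring_nf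
    rw [himg] at this
    have hinter : Set.Icc p q ∩ Set.Icc (0:ℝ) 1 = Set.Icc p q := by
      rw [Set.inter_eq_left]
      apply Set.Icc_subset_Icc <;> linarith
    rwa [hinter] at this
  -- the translates are pairwise disjoint
  have claim2 : (↑(Finset.range (n + 1)) : Set ℕ).PairwiseDisjoint F := by
    intro i hi j hj hij
    wlog h : i < j generalizing i j
    · exact (this hj hi hij.symm (by omega)).symm
    have hij1 : (i : ℝ) + 1 ≤ (j : ℝ) := by exact_mod_cast h
    refine Set.disjoint_left.mpr fun x hx1 hx2 => ?_
    simp only [hF, Set.mem_Icc] at hx1 hx2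
    nlinarith [hx1.1, hx2.2]
  have hmeas : ∀ k ∈ Finset.range (n + 1), MeasurableSet (F k) := by
    intro k _; exact measurableSet_Icc
  -- sum up
  have claim3 : ∑ k ∈ Finset.range (n + 1), μ (F k) ≤ 1 := by
    rw [← measure_biUnion_finset claim2 hmeas]
    exact le_trans (measure_mono (Set.subset_univ _)) (by simp)
  have claim4 : (n + 1 : ℕ) • μ (Set.Icc p q) ≤ 1 := by
    have := Finset.card_nsmul_le_sum (Finset.range (n + 1)) (fun k => μ (F k))
      (μ (Set.Icc p q)) claim1
    rw [Finset.card_range] at this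
    exact le_trans this claim3
  have hne : ((n : ℝ≥0∞) + 1) ≠ 0 := by simp
  have hnt : ((n : ℝ≥0∞) + 1) ≠ ⊤ := by simp
  have claim5 : μ (Set.Icc p q) ≤ ((n : ℝ≥0∞) + 1)⁻¹ := by
    rw [nsmul_eq_mul] at claim4
    push_cast at claim4
    calc μ (Set.Icc p q)
        = ((n : ℝ≥0∞) + 1)⁻¹ * (((n : ℝ≥0∞) + 1) * μ (Set.Icc p q)) := by
          rw [← mul_assoc, ENNReal.inv_mul_cancel hne hnt, one_mul]
      _ ≤ ((n : ℝ≥0∞) + 1)⁻¹ * 1 := by gcongr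
      _ = ((n : ℝ≥0∞) + 1)⁻¹ := mul_one _
  refine le_trans claim5 ?_
  have hcast : ((n : ℝ≥0∞) + 1) = ENNReal.ofReal ((n : ℝ) + 1) := by
    rw [ENNReal.ofReal_add (by positivity) zero_le_one]
    simp [ENNReal.ofReal_natCast]
  rw [hcast, ← ENNReal.ofReal_inv_of_pos (by positivity)]
  apply ENNReal.ofReal_le_ofReal
  rw [inv_le_iff_one_le_mul₀ (by positivity), div_mul_eq_mul_div, le_div_iff₀ hb0]
  nlinarith

/-- Bound the measure of `t ∩ [b,1]` by the Stieltjes `length` of `t`. -/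
lemma key_length_bound (μ : Measure ℝ) [IsProbabilityMeasure μ]
    (hmono : MonotonicMeasure μ) (b : ℝ) (hb0 : 0 < b) (hb1 : b ≤ 1)
    (t : Set ℝ) :
    μ (t ∩ Set.Icc b 1) ≤ ENNReal.ofReal (2 / b) * StieltjesFunction.id.length t := by
  set C : ℝ≥0∞ := ENNReal.ofReal (2 / b) with hC
  have hC0 : C ≠ 0 := by
    simp [hC, ENNReal.ofReal_eq_zero, not_le]
    positivity
  have hCt : C ≠ ⊤ := ENNReal.ofReal_ne_top
  -- for each covering interval Ioc a c ⊇ t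
  have hIoc : ∀ a c : ℝ, t ⊆ Set.Ioc a c →
      μ (t ∩ Set.Icc b 1) ≤ C * ENNReal.ofReal (c - a) := by
    intro a c hcov
    rcases le_or_gt c a with hca | hac
    · have : t = ∅ := Set.subset_empty_iff.mp (by rwa [Set.Ioc_eq_empty (not_lt.mpr hca)] at hcov)
      simp [this]
    · set p := max a b with hp
      set q := min c 1 with hq
      have hsubset : t ∩ Set.Icc b 1 ⊆ Set.Icc p q := by
        rintro x ⟨hxt, hx1, hx2⟩
        obtain ⟨hxa, hxc⟩ := hcov hxt
        exact ⟨max_le hxa.le hx1, le_min hxc hx2⟩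
      rcases le_or_gt p q with hpq | hqp
      · have hbp : b ≤ p := le_max_right a b
        have hq1 : q ≤ 1 := min_le_right c 1
        have hkey := key_interval_bound μ hmono b hb0 hb1 hbp hpq hq1
          (s := 2 * (c - a)) (by
            have h1 : q - p ≤ c - a := by
              have := le_max_left a b
              have := min_le_left c 1
              simp only [hp, hq]
              have h2 : q ≤ c := min_le_left c 1
              have h3 : a ≤ p := le_max_left a b
              linarith
            linarith)
        calc μ (t ∩ Set.Icc b 1) ≤ μ (Set.Icc p q) := measure_mono hsubset
          _ ≤ ENNReal.ofReal (2 * (c - a) / b) := hkey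
          _ = C * ENNReal.ofReal (c - a) := by
              rw [hC, ← ENNReal.ofReal_mul (by positivity)]
              ring_nf
      · have : t ∩ Set.Icc b 1 = ∅ := by
          apply Set.subset_empty_iff.mp
          rw [← Set.Icc_eq_empty (not_le.mpr hqp)]
          exact hsubset
        simp [this]
  -- now take the infimum defining length
  have hinv : C⁻¹ * μ (t ∩ Set.Icc b 1) ≤ StieltjesFunction.id.length t := by
    rw [StieltjesFunction.length, if_neg (not_isEmpty_of_nonempty ℝ)]
    refine le_iInf fun a => le_iInf fun c => le_iInf fun h => ?_
    have := hIoc a c (fun x hx => h ⟨hx, not_isBot x⟩)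
    calc C⁻¹ * μ (t ∩ Set.Icc b 1) ≤ C⁻¹ * (C * ENNReal.ofReal (c - a)) := by gcongr
      _ = ENNReal.ofReal (c - a) := by
          rw [← mul_assoc, ENNReal.inv_mul_cancel hC0 hCt, one_mul]
      _ = ENNReal.ofReal (StieltjesFunction.id c - StieltjesFunction.id a) := by
          simp [StieltjesFunction.id]
  calc μ (t ∩ Set.Icc b 1) = C * (C⁻¹ * μ (t ∩ Set.Icc b 1)) := by
        rw [← mul_assoc, ENNReal.mul_inv_cancel hC0 hCt, one_mul]
    _ ≤ C * StieltjesFunction.id.length t := by gcongr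

theorem stmt2 (μ : Measure ℝ) [IsProbabilityMeasure μ]
    (hsupp : μ ((Set.Icc (0:ℝ) 1)ᶜ) = 0)
    (hmono : MonotonicMeasure μ)
    (b : ℝ) (hb : b ∈ Set.Ioo (0:ℝ) 1) :
    μ.restrict (Set.Icc b 1) ≪ volume := by
  obtain ⟨hb0, hb1⟩ := hb
  intro s hs
  rw [Measure.restrict_apply' measurableSet_Icc]
  set C : ℝ≥0∞ := ENNReal.ofReal (2 / b) with hC
  have hC0 : C ≠ 0 := by
    simp [hC, ENNReal.ofReal_eq_zero, not_le]
    positivity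
  have hCt : C ≠ ⊤ := ENNReal.ofReal_ne_top
  -- volume as the Stieltjes outer measure
  have houter : StieltjesFunction.id.outer s = 0 := by
    rw [Real.volume_val, StieltjesFunction.measure] at hs
    exact hs
  have hiInf : (⨅ (t : ℕ → Set ℝ) (_ : s ⊆ ⋃ n, t n),
      ∑' n, StieltjesFunction.id.length (t n)) = 0 := by
    rw [← MeasureTheory.OuterMeasure.ofFunction_apply]
    exact houter
  have hinv : C⁻¹ * μ (s ∩ Set.Icc b 1) ≤ ⨅ (t : ℕ → Set ℝ) (_ : s ⊆ ⋃ n, t n),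
      ∑' n, StieltjesFunction.id.length (t n) := by
    refine le_iInf fun t => le_iInf fun hcov => ?_
    have hstep : μ (s ∩ Set.Icc b 1) ≤ C * ∑' n, StieltjesFunction.id.length (t n) := by
      calc μ (s ∩ Set.Icc b 1) ≤ μ ((⋃ n, t n) ∩ Set.Icc b 1) :=
            measure_mono (Set.inter_subset_inter_left _ hcov)
        _ = μ (⋃ n, t n ∩ Set.Icc b 1) := by rw [Set.iUnion_inter]
        _ ≤ ∑' n, μ (t n ∩ Set.Icc b 1) := measure_iUnion_le _
        _ ≤ ∑' n, C * StieltjesFunction.id.length (t n) :=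
            ENNReal.tsum_le_tsum fun n => key_length_bound μ hmono b hb0 hb1.le (t n)
        _ = C * ∑' n, StieltjesFunction.id.length (t n) := ENNReal.tsum_mul_left
    calc C⁻¹ * μ (s ∩ Set.Icc b 1)
        ≤ C⁻¹ * (C * ∑' n, StieltjesFunction.id.length (t n)) := by gcongr
      _ = ∑' n, StieltjesFunction.id.length (t n) := by
          rw [← mul_assoc, ENNReal.inv_mul_cancel hC0 hCt, one_mul]
  rw [hiInf] at hinv
  have := le_antisymm hinv zero_le
  rcases mul_eq_zero.mp this with h | h
  · exact absurd h (ENNReal.inv_ne_zero.mpr hCt)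
  · exact h
end

section
/- A probability measure μ on [0,1] is monotonic if and only if the function x ↦ μ([0,x]) is concave on [0,1]. (Equivalently, x ↦ μ((x,1]) is convex.) -/
open MeasureTheory Set

open Set Filter MeasureTheory ENNReal


lemma concaveOn_of_midpoint (f : ℝ → ℝ) (hc : ContinuousOn f (Icc 0 1))
    (hm : ∀ x ∈ Icc (0:ℝ) 1, ∀ y ∈ Icc (0:ℝ) 1, f x + f y ≤ 2 * f ((x+y)/2)) :
    ConcaveOn ℝ (Icc 0 1) f := by
  refine ⟨convex_Icc 0 1, ?_⟩
  intro p hp q hq a b ha hb hab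
  have hb' : b = 1 - a := by linarith
  subst hb'
  simp only [smul_eq_mul]
  -- membership helper
  have hz : ∀ t : ℝ, 0 ≤ t → t ≤ 1 → t * p + (1 - t) * q ∈ Icc (0:ℝ) 1 := by
    intro t ht ht1
    have := (convex_Icc (0:ℝ) 1) hp hq (a := t) (b := 1 - t) ht (by linarith) (by ring)
    simpa [smul_eq_mul] using this
  have key : ∀ n k : ℕ, k ≤ 2 ^ n →
      ((k:ℝ)/2^n) * f p + (1 - (k:ℝ)/2^n) * f q
        ≤ f (((k:ℝ)/2^n) * p + (1 - (k:ℝ)/2^n) * q) := by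
    intro n
    induction n with
    | zero =>
      intro k hk
      interval_cases k
      · norm_num
      · norm_num
    | succ n ih =>
      intro k hk
      rcases Nat.even_or_odd k with ⟨m, hm'⟩ | ⟨m, hm'⟩
      · subst hm'
        have hm2 : m ≤ 2 ^ n := by omega
        have heq : ((m + m : ℕ) : ℝ) / 2 ^ (n + 1) = (m : ℝ) / 2 ^ n := by
          push_cast; ring
        rw [heq]
        exact ih m hm2
      · subst hm'
        have hm2 : m + 1 ≤ 2 ^ n := by omega
        have h1 := ih m (by omega)
        have h2 := ih (m + 1) hm2
        set t1 : ℝ := (m : ℝ) / 2 ^ n with ht1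
        set t2 : ℝ := ((m + 1 : ℕ) : ℝ) / 2 ^ n with ht2
        have ht1mem : 0 ≤ t1 ∧ t1 ≤ 1 := by
          constructor
          · positivity
          · rw [ht1, div_le_one (by positivity)]
            calc (m:ℝ) ≤ ((m+1 : ℕ) : ℝ) := by push_cast; linarith
            _ ≤ 2 ^ n := by exact_mod_cast hm2
        have ht2mem : 0 ≤ t2 ∧ t2 ≤ 1 := by
          constructor
          · positivity
          · rw [ht2, div_le_one (by positivity)]
            exact_mod_cast hm2
        have hmid := hm _ (hz t1 ht1mem.1 ht1mem.2) _ (hz t2 ht2mem.1 ht2mem.2)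
        have hteq : ((2 * m + 1 : ℕ) : ℝ) / 2 ^ (n + 1) = (t1 + t2) / 2 := by
          rw [ht1, ht2]; push_cast; field_simp; ring
        rw [hteq]
        have harg : ((t1 + t2) / 2) * p + (1 - (t1 + t2) / 2) * q
            = ((t1 * p + (1 - t1) * q) + (t2 * p + (1 - t2) * q)) / 2 := by ring
        rw [harg]
        nlinarith [hmid, h1, h2]
  -- now the limit argument
  set t : ℕ → ℝ := fun n => (⌊a * 2 ^ n⌋₊ : ℝ) / 2 ^ n with htdef
  have htle : ∀ n, ⌊a * 2 ^ n⌋₊ ≤ 2 ^ n := by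
    intro n
    have : a * 2 ^ n ≤ 2 ^ n := by nlinarith [pow_pos (by norm_num : (0:ℝ) < 2) n]
    calc ⌊a * 2 ^ n⌋₊ ≤ ⌊(2:ℝ) ^ n⌋₊ := Nat.floor_le_floor this
    _ = 2 ^ n := by
        rw [show ((2:ℝ) ^ n) = ((2 ^ n : ℕ) : ℝ) by push_cast; ring, Nat.floor_natCast]
  have htmem : ∀ n, 0 ≤ t n ∧ t n ≤ 1 := by
    intro n
    constructor
    · positivity
    · rw [htdef]
      simp only
      rw [div_le_one (by positivity)]
      calc (⌊a * 2 ^ n⌋₊ : ℝ) ≤ ((2^n : ℕ) : ℝ) := by exact_mod_cast htle n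
      _ = 2 ^ n := by push_cast; ring
  have hbound : ∀ n, |t n - a| ≤ 1 / 2 ^ n := by
    intro n
    have h2p : (0:ℝ) < 2 ^ n := by positivity
    have hfl : (⌊a * 2 ^ n⌋₊ : ℝ) ≤ a * 2 ^ n := Nat.floor_le (by positivity)
    have hfu : a * 2 ^ n < ⌊a * 2 ^ n⌋₊ + 1 := Nat.lt_floor_add_one _
    rw [abs_le]
    constructor
    · rw [htdef]; simp only
      rw [neg_le, neg_sub, le_div_iff₀ h2p] at *
      rw [sub_mul, div_mul_cancel₀ _ (ne_of_gt h2p)]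
      nlinarith
    · rw [htdef]; simp only
      rw [div_sub' (ne_of_gt h2p), div_le_div_iff₀ h2p h2p]
      nlinarith
  have htend : Tendsto t atTop (nhds a) := by
    rw [tendsto_iff_dist_tendsto_zero]
    have hg : Tendsto (fun n : ℕ => (1:ℝ) / 2 ^ n) atTop (nhds 0) := by
      have : Tendsto (fun n : ℕ => ((1:ℝ)/2) ^ n) atTop (nhds 0) :=
        tendsto_pow_atTop_nhds_zero_of_lt_one (by norm_num) (by norm_num)
      simpa [div_pow] using this
    refine squeeze_zero (fun n => dist_nonneg) (fun n => ?_) hg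
    rw [Real.dist_eq]; exact hbound n
  -- pass to limit
  have hzn : Tendsto (fun n => t n * p + (1 - t n) * q) atTop (nhds (a * p + (1 - a) * q)) :=
    ((htend.mul (tendsto_const_nhds (x := p))).add
      ((((tendsto_const_nhds (x := (1:ℝ))).sub htend)).mul (tendsto_const_nhds (x := q))))
  have hfz : Tendsto (fun n => f (t n * p + (1 - t n) * q)) atTop
      (nhds (f (a * p + (1 - a) * q))) := by
    have hmem := hz a ha (by linarith)
    have hcw : ContinuousWithinAt f (Icc 0 1) (a * p + (1 - a) * q) := hc _ hmem
    apply hcw.tendsto.comp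
    rw [tendsto_nhdsWithin_iff]
    exact ⟨hzn, Eventually.of_forall fun n => hz _ (htmem n).1 (htmem n).2⟩
  have hlhs : Tendsto (fun n => t n * f p + (1 - t n) * f q) atTop
      (nhds (a * f p + (1 - a) * f q)) :=
    (htend.mul (tendsto_const_nhds (x := f p))).add
      (((tendsto_const_nhds (x := (1:ℝ))).sub htend).mul (tendsto_const_nhds (x := f q)))
  refine le_of_tendsto_of_tendsto hlhs hfz (Eventually.of_forall fun n => ?_)
  exact key n _ (htle n)

section
variable {μ : Measure ℝ}

/-- translation inequality for half-open intervals -/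
lemma key_Ioc (hmono : ∀ a b : ℝ, Set.Icc a b ⊆ Set.Icc 0 1 →
      ∀ x ∈ Set.Icc (0:ℝ) 1,
        μ ((fun y => y + x) '' Set.Icc a b ∩ Set.Icc 0 1) ≤ μ (Set.Icc a b))
    {s t h : ℝ} (hs : 0 ≤ s) (hst : s ≤ t) (hh : 0 < h) (hth : t + h ≤ 1) :
    μ (Ioc t (t + h)) ≤ μ (Ioc s (s + h)) := by
  have hsub : ∀ n : ℕ, μ (Icc (t + h / (n + 1)) (t + h)) ≤ μ (Ioc s (s + h)) := by
    intro n
    have hd0 : 0 < h / (n + 1) := by positivity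
    have hdh : h / (n + 1) ≤ h := by
      rw [div_le_iff₀ (by positivity)]
      nlinarith
    have hmain := hmono (s + h / (n + 1)) (s + h)
      (Set.Icc_subset_Icc (by linarith) (by linarith)) (t - s)
      ⟨by linarith, by linarith⟩
    rw [Set.image_add_const_Icc] at hmain
    have e1 : s + h / (n + 1) + (t - s) = t + h / (n + 1) := by ring
    have e2 : s + h + (t - s) = t + h := by ring
    rw [e1, e2, Set.inter_eq_left.mpr (Set.Icc_subset_Icc (by linarith) (by linarith))] at hmain
    refine hmain.trans (measure_mono ?_)
    intro y hy
    exact ⟨by linarith [hy.1], by linarith [hy.2]⟩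
  have hUnion : Ioc t (t + h) = ⋃ n : ℕ, Icc (t + h / (n + 1)) (t + h) := by
    ext y
    simp only [mem_Ioc, mem_iUnion, mem_Icc]
    constructor
    · rintro ⟨h1, h2⟩
      have hyt : (0:ℝ) < (y - t) / h := by
        apply div_pos (by linarith) hh
      obtain ⟨n, hn⟩ := exists_nat_one_div_lt hyt
      refine ⟨n, ?_, h2⟩
      have hn1 : (0:ℝ) < (n:ℝ) + 1 := by positivity
      rw [div_lt_div_iff₀ hn1 hh] at hn
      have : h / (n + 1) < y - t := by
        rw [div_lt_iff₀ hn1]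
        nlinarith
      linarith
    · rintro ⟨n, h1, h2⟩
      have hd0 : 0 < h / (n + 1) := by positivity
      exact ⟨by linarith, h2⟩
  rw [hUnion, Directed.measure_iUnion]
  · exact iSup_le hsub
  · apply Monotone.directed_le
    intro m n hmn
    apply Set.Icc_subset_Icc _ le_rfl
    have : h / (n + 1) ≤ h / (m + 1) := by
      apply div_le_div_of_nonneg_left hh.le (by positivity)
      have : (m:ℝ) ≤ (n:ℝ) := Nat.cast_le.mpr hmn
      linarith
    linarith

/-- splitting [0,u] at s -/
lemma Gsplit {s u : ℝ} (hs : 0 ≤ s) (hsu : s ≤ u) :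
    μ (Icc 0 u) = μ (Icc 0 s) + μ (Ioc s u) := by
  rw [← Set.Icc_union_Ioc_eq_Icc hs hsu]
  exact measure_union (by
    rw [Set.disjoint_left]
    intro y hy hy'
    exact absurd hy.2 (not_le.mpr hy'.1)) measurableSet_Ioc

lemma GIoc [IsFiniteMeasure μ] {s u : ℝ} (hs : 0 ≤ s) (hsu : s ≤ u) :
    (μ (Ioc s u)).toReal = (μ (Icc 0 u)).toReal - (μ (Icc 0 s)).toReal := by
  rw [Gsplit hs hsu, ENNReal.toReal_add (measure_ne_top μ _) (measure_ne_top μ _)]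
  ring

lemma Gmono [IsFiniteMeasure μ] {x y : ℝ} (hxy : x ≤ y) :
    (μ (Icc 0 x)).toReal ≤ (μ (Icc 0 y)).toReal :=
  ENNReal.toReal_mono (measure_ne_top μ _) (measure_mono (Set.Icc_subset_Icc_right hxy))

/-- Wright convexity-type inequality -/
lemma wright [IsFiniteMeasure μ]
    (hmono : ∀ a b : ℝ, Set.Icc a b ⊆ Set.Icc 0 1 →
      ∀ x ∈ Set.Icc (0:ℝ) 1,
        μ ((fun y => y + x) '' Set.Icc a b ∩ Set.Icc 0 1) ≤ μ (Set.Icc a b))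
    {s t h : ℝ} (hs : 0 ≤ s) (hst : s ≤ t) (hh : 0 ≤ h) (hth : t + h ≤ 1) :
    (μ (Icc 0 (t + h))).toReal + (μ (Icc 0 s)).toReal
      ≤ (μ (Icc 0 t)).toReal + (μ (Icc 0 (s + h))).toReal := by
  rcases eq_or_lt_of_le hh with rfl | hh'
  · simp
  have hkey := key_Ioc hmono hs hst hh' hth
  have h1 := GIoc (μ := μ) (le_trans hs hst) (by linarith : t ≤ t + h)
  have h2 := GIoc (μ := μ) hs (by linarith : s ≤ s + h)
  have := ENNReal.toReal_mono (measure_ne_top μ _) hkey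
  rw [h1, h2] at this
  linarith

/-- n disjoint translates: small increments -/
lemma small_incr [IsProbabilityMeasure μ]
    (hmono : ∀ a b : ℝ, Set.Icc a b ⊆ Set.Icc 0 1 →
      ∀ x ∈ Set.Icc (0:ℝ) 1,
        μ ((fun y => y + x) '' Set.Icc a b ∩ Set.Icc 0 1) ≤ μ (Set.Icc a b))
    {x y : ℝ} (n : ℕ) (hx : 0 ≤ x) (hxy : x ≤ y) (hy : y ≤ 1)
    (hn : (n : ℝ) * (y - x) ≤ y) :
    (n : ℝ≥0∞) * μ (Ioc x y) ≤ 1 := by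
  rcases eq_or_lt_of_le hxy with rfl | hxy'
  · simp
  set h : ℝ := y - x with hdef
  have hh : 0 < h := by simp [hdef]; linarith
  -- each translate has measure at least μ (Ioc x y)
  have heach : ∀ j : ℕ, j < n → μ (Ioc x y) ≤ μ (Ioc ((j:ℝ) * h) ((j:ℝ) * h + h)) := by
    intro j hj
    have hjh : 0 ≤ (j:ℝ) * h := by positivity
    have hjx : (j:ℝ) * h ≤ x := by
      have hj1 : (j:ℝ) + 1 ≤ n := by exact_mod_cast hj
      nlinarith
    have := key_Ioc hmono hjh hjx hh (by linarith : x + h ≤ 1)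
    rw [show x + h = y by rw [hdef]; ring] at this
    exact this
  -- sum over disjoint translates
  have hmain : ∀ i j : ℕ, i < j →
      Disjoint (Ioc ((i:ℝ) * h) ((i:ℝ) * h + h)) (Ioc ((j:ℝ) * h) ((j:ℝ) * h + h)) := by
    intro i j hij
    rw [Set.Ioc_disjoint_Ioc]
    have hij' : (i:ℝ) + 1 ≤ (j:ℝ) := by exact_mod_cast hij
    have : (i:ℝ) * h + h ≤ (j:ℝ) * h := by nlinarith
    calc ((i:ℝ) * h + h) ⊓ ((j:ℝ) * h + h) ≤ (i:ℝ) * h + h := inf_le_left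
    _ ≤ (j:ℝ) * h := this
    _ ≤ ((i:ℝ) * h) ⊔ ((j:ℝ) * h) := le_sup_right
  have hdisj : (↑(Finset.range n) : Set ℕ).PairwiseDisjoint
      (fun j : ℕ => Ioc ((j:ℝ) * h) ((j:ℝ) * h + h)) := by
    intro i _ j _ hij
    rcases lt_or_gt_of_ne hij with hlt | hlt
    · exact hmain i j hlt
    · exact (hmain j i hlt).symm
  have hsum : ∑ j ∈ Finset.range n, μ (Ioc ((j:ℝ) * h) ((j:ℝ) * h + h)) ≤ 1 := by
    rw [← measure_biUnion_finset hdisj (fun j _ => measurableSet_Ioc)]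
    calc μ _ ≤ μ univ := measure_mono (subset_univ _)
    _ = 1 := measure_univ
  calc (n : ℝ≥0∞) * μ (Ioc x y) = ∑ _j ∈ Finset.range n, μ (Ioc x y) := by
        simp [Finset.sum_const, nsmul_eq_mul]
  _ ≤ ∑ j ∈ Finset.range n, μ (Ioc ((j:ℝ) * h) ((j:ℝ) * h + h)) :=
        Finset.sum_le_sum (fun j hj => heach j (Finset.mem_range.mp hj))
  _ ≤ 1 := hsum

lemma Gcont [IsProbabilityMeasure μ]
    (hmono : ∀ a b : ℝ, Set.Icc a b ⊆ Set.Icc 0 1 →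
      ∀ x ∈ Set.Icc (0:ℝ) 1,
        μ ((fun y => y + x) '' Set.Icc a b ∩ Set.Icc 0 1) ≤ μ (Set.Icc a b)) :
    ContinuousOn (fun x => (μ (Icc 0 x)).toReal) (Icc 0 1) := by
  intro p hp
  rw [Metric.continuousWithinAt_iff]
  intro ε hε
  rcases eq_or_lt_of_le hp.1 with hp0 | hp0
  · -- p = 0 : right continuity at 0
    have hms : ∀ m : ℕ, NullMeasurableSet (Ioc (0:ℝ) (1/(m+1))) μ :=
      fun m => measurableSet_Ioc.nullMeasurableSet
    have hanti : Antitone (fun m : ℕ => Ioc (0:ℝ) (1/(m+1))) := by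
      intro i j hij
      apply Set.Ioc_subset_Ioc le_rfl
      have : (i:ℝ) ≤ (j:ℝ) := Nat.cast_le.mpr hij
      apply div_le_div_of_nonneg_left (by norm_num) (by positivity)
      linarith
    have hseq := MeasureTheory.tendsto_measure_iInter_atTop hms hanti ⟨0, measure_ne_top μ _⟩
    have hempty : ⋂ m : ℕ, Ioc (0:ℝ) (1/(m+1)) = ∅ := by
      ext y
      simp only [mem_iInter, mem_Ioc, mem_empty_iff_false, iff_false, not_forall, not_and, not_le]
      by_cases hy : 0 < y
      · obtain ⟨m, hm⟩ := exists_nat_one_div_lt hy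
        exact ⟨m, fun _ => by exact_mod_cast hm⟩
      · exact ⟨0, fun h => absurd h hy⟩
    rw [hempty, measure_empty] at hseq
    have := hseq.eventually_lt_const (show (0:ℝ≥0∞) < ENNReal.ofReal ε by
      simp [ENNReal.ofReal_pos, hε])
    obtain ⟨m, hm⟩ := this.exists
    refine ⟨1/(m+1), by positivity, ?_⟩
    intro x hx hdist
    have hx0 : 0 ≤ x := hx.1
    rw [Real.dist_eq, ← hp0] at hdist
    have hxlt : x < 1/(m+1) := by
      rw [abs_lt] at hdist; simpa using hdist.2
    rw [← hp0, Real.dist_eq, abs_of_nonneg (by linarith [Gmono (μ := μ) hx0] :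
      (0:ℝ) ≤ (μ (Icc 0 x)).toReal - (μ (Icc 0 0)).toReal)]
    rw [← GIoc le_rfl hx0]
    calc (μ (Ioc 0 x)).toReal ≤ (μ (Ioc (0:ℝ) (1/(m+1)))).toReal :=
        ENNReal.toReal_mono (measure_ne_top μ _) (measure_mono (Set.Ioc_subset_Ioc le_rfl hxlt.le))
    _ < ε := ENNReal.toReal_lt_of_lt_ofReal hm
  · -- p > 0
    obtain ⟨n, hn⟩ := exists_nat_one_div_lt hε
    set N : ℕ := n + 1 with hN
    have hNpos : (0:ℝ) < N := by positivity
    have hbound : ∀ lo hi : ℝ, 0 ≤ lo → lo ≤ hi → hi ≤ 1 → (N:ℝ) * (hi - lo) ≤ hi →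
        (μ (Ioc lo hi)).toReal ≤ 1/(N:ℝ) := by
      intro lo hi h1 h2 h3 h4
      have := small_incr hmono N h1 h2 h3 h4
      have hle : μ (Ioc lo hi) ≤ ((N:ℝ≥0∞))⁻¹ := by
        rw [ENNReal.le_inv_iff_mul_le, mul_comm]
        exact this
      calc (μ (Ioc lo hi)).toReal ≤ (((N:ℝ≥0∞))⁻¹).toReal :=
          ENNReal.toReal_mono (by simp) hle
      _ = 1/(N:ℝ) := by simp [ENNReal.toReal_inv]
    refine ⟨p/N, by positivity, ?_⟩
    intro x hx hdist
    rw [Real.dist_eq] at hdist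
    have h1N : 1/(N:ℝ) < ε := by
      calc 1/(N:ℝ) = 1/((n:ℝ)+1) := by rw [hN]; push_cast; ring
      _ < ε := hn
    rcases le_total x p with hxp | hxp
    · rw [Real.dist_eq, abs_of_nonpos (by linarith [Gmono (μ := μ) hxp] :
        (μ (Icc 0 x)).toReal - (μ (Icc 0 p)).toReal ≤ 0), neg_sub, ← GIoc hx.1 hxp]
      have : (N:ℝ) * (p - x) ≤ p := by
        have h' : p - x < p/N := by rw [abs_lt] at hdist; linarith [hdist.2, neg_lt.mp hdist.1]
        nlinarith [(lt_div_iff₀ hNpos).mp h']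
      calc (μ (Ioc x p)).toReal ≤ 1/(N:ℝ) := hbound x p hx.1 hxp hp.2 this
      _ < ε := h1N
    · rw [Real.dist_eq, abs_of_nonneg (by linarith [Gmono (μ := μ) hxp] :
        (0:ℝ) ≤ (μ (Icc 0 x)).toReal - (μ (Icc 0 p)).toReal), ← GIoc hp.1 hxp]
      have : (N:ℝ) * (x - p) ≤ x := by
        have h' : x - p < p/N := by rw [abs_lt] at hdist; linarith [hdist.2]
        nlinarith [(lt_div_iff₀ hNpos).mp h', hp0.le.trans hxp]
      calc (μ (Ioc p x)).toReal ≤ 1/(N:ℝ) := hbound p x hp.1 hxp hx.2 this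
      _ < ε := h1N

lemma noatom [IsProbabilityMeasure μ]
    (hG : ConcaveOn ℝ (Icc 0 1) (fun x => (μ (Set.Icc 0 x)).toReal))
    {s : ℝ} (hs0 : 0 < s) (hs1 : s ≤ 1) : μ {s} = 0 := by
  set G : ℝ → ℝ := fun x => (μ (Set.Icc 0 x)).toReal with hGdef
  -- lower bound for G q, 0 ≤ q ≤ s
  have hGq : ∀ q : ℝ, 0 ≤ q → q ≤ s → (q/s) * G s ≤ G q := by
    intro q hq hqs
    have h0m : (0:ℝ) ∈ Icc (0:ℝ) 1 := by constructor <;> norm_num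
    have hsm : s ∈ Icc (0:ℝ) 1 := ⟨hs0.le, hs1⟩
    have ht1 : (0:ℝ) ≤ 1 - q/s := by
      have : q/s ≤ 1 := by rw [div_le_one hs0]; exact hqs
      linarith
    have ht2 : (0:ℝ) ≤ q/s := by positivity
    have := hG.2 h0m hsm ht1 ht2 (by ring)
    simp only [smul_eq_mul, mul_zero, zero_add] at this
    have harg : q/s * s = q := div_mul_cancel₀ q (ne_of_gt hs0)
    rw [harg] at this
    have hG0 : 0 ≤ G 0 := ENNReal.toReal_nonneg
    nlinarith
  -- split Icc 0 s = Ico 0 s ∪ {s}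
  have hsplit : μ (Icc 0 s) = μ (Ico 0 s) + μ {s} := by
    rw [← Set.Ico_union_right hs0.le]
    refine measure_union ?_ (measurableSet_singleton s)
    rw [Set.disjoint_left]
    intro y hy hy'
    rw [Set.mem_singleton_iff] at hy'
    exact absurd (hy' ▸ hy.2) (lt_irrefl s)
  -- left limit : toReal μ (Ico 0 s) ≥ G s
  have hIco : G s ≤ (μ (Ico 0 s)).toReal := by
    have htd : Filter.Tendsto (fun q : ℝ => (q/s) * G s) (nhdsWithin s (Iio s))
        (nhds (G s)) := by
      have hc : Filter.Tendsto (fun q : ℝ => (q/s) * G s) (nhds s) (nhds ((s/s) * G s)) := by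
        exact ((continuous_id.div_const s).mul continuous_const).tendsto s
      rw [div_self (ne_of_gt hs0), one_mul] at hc
      exact hc.mono_left nhdsWithin_le_nhds
    refine le_of_tendsto htd ?_
    filter_upwards [self_mem_nhdsWithin] with q hq
    rcases le_or_gt 0 q with hq0 | hq0
    · calc (q/s) * G s ≤ G q := hGq q hq0 (le_of_lt hq)
      _ ≤ (μ (Ico 0 s)).toReal := ENNReal.toReal_mono (measure_ne_top μ _)
          (measure_mono (fun y hy => ⟨hy.1, lt_of_le_of_lt hy.2 hq⟩))
    · have h1 : q/s < 0 := div_neg_of_neg_of_pos hq0 hs0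
      have h2 : 0 ≤ G s := ENNReal.toReal_nonneg
      nlinarith [ENNReal.toReal_nonneg (a := μ (Ico 0 s))]
  have hfin : (μ (Icc 0 s)).toReal = (μ (Ico 0 s)).toReal + (μ {s}).toReal := by
    rw [hsplit, ENNReal.toReal_add (measure_ne_top μ _) (measure_ne_top μ _)]
  have : (μ {s}).toReal ≤ 0 := by
    have : G s = (μ (Icc 0 s)).toReal := rfl
    rw [this] at hIco
    linarith [hfin ▸ hIco]
  have h0 : (μ {s}).toReal = 0 := le_antisymm this ENNReal.toReal_nonneg
  rw [ENNReal.toReal_eq_zero_iff] at h0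
  rcases h0 with h0 | h0
  · exact h0
  · exact absurd h0 (measure_ne_top μ _)
end

theorem stmt3 (μ : Measure ℝ) [IsProbabilityMeasure μ]
    (hsupp : μ ((Set.Icc (0:ℝ) 1)ᶜ) = 0) :
    MonotonicMeasure μ ↔
      ConcaveOn ℝ (Set.Icc 0 1) (fun x => (μ (Set.Icc 0 x)).toReal) := by
  constructor
  · intro hmono
    apply concaveOn_of_midpoint
    · exact Gcont hmono
    · intro x hx y hy
      have main : ∀ x y : ℝ, x ∈ Icc (0:ℝ) 1 → y ∈ Icc (0:ℝ) 1 → x ≤ y →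
          (μ (Icc 0 x)).toReal + (μ (Icc 0 y)).toReal
            ≤ 2 * (μ (Icc 0 ((x + y)/2))).toReal := by
        intro x y hx hy hxy
        have hw := wright (μ := μ) hmono (s := x) (t := (x+y)/2) (h := (y-x)/2)
          hx.1 (by linarith) (by linarith) (by linarith [hy.2])
        have e1 : (x+y)/2 + (y-x)/2 = y := by ring
        have e2 : x + (y-x)/2 = (x+y)/2 := by ring
        rw [e1, e2] at hw
        linarith
      rcases le_total x y with h | h
      · exact main x y hx hy h
      · have := main y x hy hx h
        have e : (y + x)/2 = (x + y)/2 := by ring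
        rw [e] at this
        linarith
  · intro hG a b hab x hx
    by_cases hba : b < a
    · rw [Set.Icc_eq_empty (not_le.mpr hba)]
      simp
    push_neg at hba
    have ha0 : 0 ≤ a := (hab ⟨le_refl a, hba⟩).1
    have hb1 : b ≤ 1 := (hab ⟨hba, le_refl b⟩).2
    rw [Set.image_add_const_Icc, Set.Icc_inter_Icc]
    rw [max_eq_left (by linarith [hx.1] : (0:ℝ) ≤ a + x)]
    rcases eq_or_lt_of_le hx.1 with hx0 | hx0
    · -- x = 0
      rw [← hx0]
      have e : a + 0 = a := by ring
      rw [e]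
      refine measure_mono ?_
      refine Set.Icc_subset_Icc le_rfl ?_
      calc (b + 0) ⊓ 1 ≤ b + 0 := inf_le_left
      _ = b := by ring
    by_cases hs1 : 1 < a + x
    · rw [Set.Icc_eq_empty]
      · simp
      push_neg
      calc (b + x) ⊓ 1 ≤ 1 := inf_le_right
      _ < a + x := hs1
    push_neg at hs1
    set u : ℝ := (b + x) ⊓ 1 with hudef
    have hsu : a + x ≤ u := le_inf (by linarith) hs1
    have hu1 : u ≤ 1 := inf_le_right
    have hub : u ≤ b + x := inf_le_left
    have hatom : μ {a + x} = 0 := noatom hG (by linarith) hs1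
    have hIocle : μ (Ioc (a+x) u) ≤ μ (Ioc a b) := by
      rw [← ENNReal.toReal_le_toReal (measure_ne_top μ _) (measure_ne_top μ _)]
      rw [GIoc (by linarith : (0:ℝ) ≤ a + x) hsu, GIoc ha0 hba]
      set G : ℝ → ℝ := fun z => (μ (Set.Icc 0 z)).toReal with hGdef
      rcases le_total u b with hcase | hcase
      · have g1 : G u ≤ G b := Gmono hcase
        have g2 : G a ≤ G (a + x) := Gmono (by linarith)
        linarith
      · have hua : 0 < u - a := by linarith
        set t : ℝ := (u - b)/(u - a) with htdef
        have ht0 : 0 ≤ t := div_nonneg (by linarith) hua.le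
        have ht1 : t ≤ 1 := by
          rw [htdef, div_le_one hua]; linarith
        have ham : a ∈ Icc (0:ℝ) 1 := ⟨ha0, by linarith⟩
        have hum : u ∈ Icc (0:ℝ) 1 := ⟨by linarith, hu1⟩
        have h1 := hG.2 ham hum ht0 (by linarith : (0:ℝ) ≤ 1 - t) (by ring)
        have h2 := hG.2 ham hum (by linarith : (0:ℝ) ≤ 1 - t) ht0 (by ring)
        simp only [smul_eq_mul] at h1 h2
        have e1 : t * a + (1 - t) * u = b := by
          rw [htdef]; field_simp; ring
        have e2 : (1 - t) * a + t * u = a + u - b := by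
          rw [htdef]; field_simp; ring
        rw [e1] at h1
        rw [e2] at h2
        have g3 : G (a + u - b) ≤ G (a + x) := Gmono (by linarith)
        have hGa : t * G a + (1 - t) * G u ≤ G b := h1
        have hGc : (1 - t) * G a + t * G u ≤ G (a + u - b) := h2
        linarith
    calc μ (Icc (a+x) u) ≤ μ ({a+x} ∪ Ioc (a+x) u) := by
          refine measure_mono ?_
          intro y hy
          rcases eq_or_lt_of_le hy.1 with h | h
          · exact Or.inl (by simp [← h])
          · exact Or.inr ⟨h, hy.2⟩
    _ ≤ μ {a+x} + μ (Ioc (a+x) u) := measure_union_le _ _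
    _ = μ (Ioc (a+x) u) := by rw [hatom, zero_add]
    _ ≤ μ (Ioc a b) := hIocle
    _ ≤ μ (Icc a b) := measure_mono Set.Ioc_subset_Icc_self
end

section
/- Let μ be a monotonic probability measure on [0,1] and let A, B ⊆ [0,1] be nonempty intervals of positive length satisfying inf A ≤ inf B and sup A ≤ sup B. Then μ(A)/m(A) ≥ μ(B)/m(B), where m is Lebesgue measure. -/
open MeasureTheory Set

lemma shift_le (μ : Measure ℝ)
    (hsupp : μ ((Set.Icc (0:ℝ) 1)ᶜ) = 0) (hmono : MonotonicMeasure μ)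
    {s t h : ℝ} (hs : 0 ≤ s) (hsh : s + h ≤ 1) (hst : s ≤ t) (ht1 : t ≤ s + 1) :
    μ (Icc t (t + h)) ≤ μ (Icc s (s + h)) := by
  have hx : t - s ∈ Icc (0:ℝ) 1 := ⟨by linarith, by linarith⟩
  have hsub : Icc s (s + h) ⊆ Icc 0 1 := fun y hy => ⟨by linarith [hy.1], by linarith [hy.2]⟩
  have key := hmono s (s + h) hsub (t - s) hx
  have himg : (fun y => y + (t - s)) '' Icc s (s + h) = Icc t (t + h) := by
    rw [Set.image_add_const_Icc]
    congr 1 <;> ring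
  rw [himg] at key
  calc μ (Icc t (t + h))
      = μ (Icc t (t + h) ∩ Icc 0 1) + μ (Icc t (t + h) \ Icc 0 1) :=
        (measure_inter_add_diff _ measurableSet_Icc).symm
    _ ≤ μ (Icc t (t + h) ∩ Icc 0 1) + μ ((Icc (0:ℝ) 1)ᶜ) := by
        gcongr; exact diff_subset_compl _ _
    _ = μ (Icc t (t + h) ∩ Icc 0 1) := by rw [hsupp, add_zero]
    _ ≤ μ (Icc s (s + h)) := key

lemma atom_free (μ : Measure ℝ) [IsProbabilityMeasure μ]
    (hsupp : μ ((Set.Icc (0:ℝ) 1)ᶜ) = 0) (hmono : MonotonicMeasure μ)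
    {p : ℝ} (hp0 : 0 < p) (hp1 : p ≤ 1) : μ {p} = 0 := by
  by_contra hne
  have hpos : 0 < μ {p} := pos_iff_ne_zero.mpr hne
  have hall : ∀ q ∈ Ioc (0:ℝ) p, 0 < μ {q} := by
    intro q hq
    have h := shift_le μ hsupp hmono (s := q) (t := p) (h := 0)
      (le_of_lt hq.1) (by linarith [hq.2]) hq.2 (by linarith [hq.1])
    simp only [add_zero, Icc_self] at h
    exact lt_of_lt_of_le hpos h
  have hc : Set.Countable {q : ℝ | 0 < μ {q}} := by
    apply MeasureTheory.Measure.countable_meas_pos_of_disjoint_iUnion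
      (As := fun q : ℝ => {q})
    · intro i; exact measurableSet_singleton i
    · intro i j hij
      simp [Function.onFun, hij]
  have hsubset : Ioc (0:ℝ) p ⊆ {q : ℝ | 0 < μ {q}} := hall
  have : volume (Ioc (0:ℝ) p) = 0 := measure_mono_null hsubset (hc.measure_zero volume)
  rw [Real.volume_Ioc] at this
  simp only [ENNReal.ofReal_eq_zero, sub_nonpos] at this
  linarith

lemma Icc_eq_Ico_meas (μ : Measure ℝ) [IsProbabilityMeasure μ]
    (hsupp : μ ((Set.Icc (0:ℝ) 1)ᶜ) = 0) (hmono : MonotonicMeasure μ)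
    {p q : ℝ} (hpq : p ≤ q) (hq0 : 0 < q) (hq1 : q ≤ 1) :
    μ (Icc p q) = μ (Ico p q) := by
  rw [← Set.Ico_union_right hpq]
  refine le_antisymm ?_ (measure_mono Set.subset_union_left)
  calc μ (Ico p q ∪ {q}) ≤ μ (Ico p q) + μ {q} := measure_union_le _ _
    _ = μ (Ico p q) := by rw [atom_free μ hsupp hmono hq0 hq1, add_zero]

lemma part_sum (μ : Measure ℝ) (c h : ℝ) (hh : 0 ≤ h) :
    ∀ N : ℕ, μ (Ico c (c + N * h)) = ∑ k ∈ Finset.range N, μ (Ico (c + k * h) (c + k * h + h)) := by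
  intro N
  induction N with
  | zero => simp
  | succ N ih =>
    have h1 : c ≤ c + N * h := by nlinarith [Nat.cast_nonneg (α := ℝ) N]
    have h2 : c + N * h ≤ c + (N + 1 : ℕ) * h := by push_cast; nlinarith
    rw [← Set.Ico_union_Ico_eq_Ico h1 h2,
      measure_union (Set.Ico_disjoint_Ico_same) measurableSet_Ico, ih,
      Finset.sum_range_succ]
    congr 2
    push_cast; ring

lemma cover_sum (μ : Measure ℝ) (c h : ℝ) (hh : 0 ≤ h) :
    ∀ N : ℕ, 1 ≤ N → μ (Icc c (c + N * h)) ≤ ∑ k ∈ Finset.range N, μ (Icc (c + k * h) (c + k * h + h)) := by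
  intro N hN
  induction N with
  | zero => omega
  | succ N ih =>
    rcases Nat.eq_or_lt_of_le hN with hN1 | hN1
    · obtain rfl : N = 0 := by omega
      rw [Finset.sum_range_one]
      exact measure_mono (Set.Icc_subset_Icc (by push_cast; linarith) (by push_cast; linarith))
    · have hN' : 1 ≤ N := by omega
      have h1 : c ≤ c + N * h := by nlinarith [Nat.cast_nonneg (α := ℝ) N]
      have h2 : c + N * h ≤ c + (N + 1 : ℕ) * h := by push_cast; nlinarith
      rw [← Set.Icc_union_Icc_eq_Icc h1 h2]
      refine le_trans (measure_union_le _ _) ?_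
      rw [Finset.sum_range_succ]
      refine add_le_add (ih hN') (measure_mono (Set.Icc_subset_Icc le_rfl ?_))
      push_cast
      have : c + ((N:ℝ)+1)*h = c + (N:ℝ)*h + h := by ring
      linarith

lemma counting {d e : ℕ → ENNReal} {n m : ℕ} (hn : 0 < n) (hm : 0 < m)
    (hd : ∀ i j, i ≤ j → j < n → d j ≤ d i)
    (hcross : ∀ j k, j < n → k < m → j + m ≤ k + n ∨ j ≤ k → e k ≤ d j) :
    (n : ENNReal) * ∑ k ∈ Finset.range m, e k ≤ (m : ENNReal) * ∑ j ∈ Finset.range n, d j := by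
  rcases le_or_gt n m with hnm | hmn
  · -- n ≤ m
    have hsplit : ∑ k ∈ Finset.range m, e k ≤
        (∑ j ∈ Finset.range n, d j) + (m - n : ℕ) * d (n - 1) := by
      rw [Finset.range_eq_Ico, ← Finset.sum_Ico_consecutive _ (Nat.zero_le n) hnm]
      refine add_le_add ?_ ?_
      · rw [← Finset.range_eq_Ico]
        refine Finset.sum_le_sum fun k hk => ?_
        have hk' := Finset.mem_range.mp hk
        exact hcross k k hk' (lt_of_lt_of_le hk' hnm) (Or.inr le_rfl)
      · calc ∑ k ∈ Finset.Ico n m, e k ≤ ∑ k ∈ Finset.Ico n m, d (n-1) := by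
              refine Finset.sum_le_sum fun k hk => ?_
              have hk' := Finset.mem_Ico.mp hk
              exact hcross (n-1) k (by omega) hk'.2 (Or.inr (by omega))
          _ = (m - n : ℕ) * d (n-1) := by
              rw [Finset.sum_const, Nat.card_Ico, nsmul_eq_mul]
    have hlast : (n : ENNReal) * d (n - 1) ≤ ∑ j ∈ Finset.range n, d j := by
      calc (n : ENNReal) * d (n-1) = ∑ _j ∈ Finset.range n, d (n-1) := by
            rw [Finset.sum_const, nsmul_eq_mul, Finset.card_range]
        _ ≤ ∑ j ∈ Finset.range n, d j :=
            Finset.sum_le_sum fun j hj => hd j (n-1) (by have := Finset.mem_range.mp hj; omega) (by omega)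
    calc (n : ENNReal) * ∑ k ∈ Finset.range m, e k
        ≤ (n : ENNReal) * ((∑ j ∈ Finset.range n, d j) + (m - n : ℕ) * d (n - 1)) := by
          gcongr
      _ = (n : ENNReal) * ∑ j ∈ Finset.range n, d j
            + (m - n : ℕ) * ((n : ENNReal) * d (n-1)) := by ring
      _ ≤ (n : ENNReal) * ∑ j ∈ Finset.range n, d j
            + (m - n : ℕ) * ∑ j ∈ Finset.range n, d j := by gcongr
      _ = ((n : ENNReal) + (m - n : ℕ)) * ∑ j ∈ Finset.range n, d j := by ring
      _ = (m : ENNReal) * ∑ j ∈ Finset.range n, d j := by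
          congr 1
          rw [← Nat.cast_add]
          congr 1
          omega
  · -- m < n
    have hT : ∑ k ∈ Finset.range m, e k ≤ ∑ k ∈ Finset.range m, d (k + (n - m)) := by
      refine Finset.sum_le_sum fun k hk => ?_
      have hk' := Finset.mem_range.mp hk
      exact hcross (k + (n - m)) k (by omega) hk' (Or.inl (by omega))
    -- tail sum T' = sum over Ico (n-m) n of d = sum over range m of d (k + (n-m))
    have hreindex : ∑ j ∈ Finset.Ico (n - m) n, d j = ∑ k ∈ Finset.range m, d (k + (n - m)) := by
      rw [Finset.sum_Ico_eq_sum_range]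
      have : n - (n - m) = m := by omega
      rw [this]
      exact Finset.sum_congr rfl fun k _ => by rw [add_comm]
    have htail_le : ∀ k < m, d (k + (n - m)) ≤ d (n - m) :=
      fun k hk => hd (n - m) (k + (n - m)) (by omega) (by omega)
    have hhead_ge : ∀ j < n - m, d (n - m) ≤ d j :=
      fun j hj => hd j (n - m) (by omega) (by omega)
    have hTle : ∑ k ∈ Finset.range m, d (k + (n - m)) ≤ (m : ENNReal) * d (n - m) := by
      calc ∑ k ∈ Finset.range m, d (k + (n - m)) ≤ ∑ _k ∈ Finset.range m, d (n - m) :=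
            Finset.sum_le_sum fun k hk => htail_le k (Finset.mem_range.mp hk)
        _ = (m : ENNReal) * d (n - m) := by
            rw [Finset.sum_const, nsmul_eq_mul, Finset.card_range]
    have hHge : ((n - m : ℕ) : ENNReal) * d (n - m) ≤ ∑ j ∈ Finset.range (n - m), d j := by
      calc ((n - m : ℕ) : ENNReal) * d (n - m) = ∑ _j ∈ Finset.range (n - m), d (n - m) := by
            rw [Finset.sum_const, nsmul_eq_mul, Finset.card_range]
        _ ≤ _ := Finset.sum_le_sum fun j hj => hhead_ge j (Finset.mem_range.mp hj)
    have hsum_split : ∑ j ∈ Finset.range n, d j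
        = (∑ j ∈ Finset.range (n - m), d j) + ∑ k ∈ Finset.range m, d (k + (n - m)) := by
      rw [← hreindex, Finset.range_eq_Ico, ← Finset.sum_Ico_consecutive _ (Nat.zero_le (n - m)) (by omega : n - m ≤ n)]
      rw [Finset.range_eq_Ico]
    calc (n : ENNReal) * ∑ k ∈ Finset.range m, e k
        ≤ (n : ENNReal) * ∑ k ∈ Finset.range m, d (k + (n - m)) := by gcongr
      _ = ((n - m : ℕ) : ENNReal) * ∑ k ∈ Finset.range m, d (k + (n - m))
          + (m : ENNReal) * ∑ k ∈ Finset.range m, d (k + (n - m)) := by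
          rw [← add_mul, ← Nat.cast_add]
          congr 2
          omega
      _ ≤ ((n - m : ℕ) : ENNReal) * ((m : ENNReal) * d (n - m))
          + (m : ENNReal) * ∑ k ∈ Finset.range m, d (k + (n - m)) := by gcongr
      _ = (m : ENNReal) * (((n - m : ℕ) : ENNReal) * d (n - m))
          + (m : ENNReal) * ∑ k ∈ Finset.range m, d (k + (n - m)) := by ring
      _ ≤ (m : ENNReal) * (∑ j ∈ Finset.range (n - m), d j)
          + (m : ENNReal) * ∑ k ∈ Finset.range m, d (k + (n - m)) := by gcongr
      _ = (m : ENNReal) * ∑ j ∈ Finset.range n, d j := by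
          rw [hsum_split]; ring

set_option maxHeartbeats 2000000 in
theorem stmt4 (μ : Measure ℝ) [IsProbabilityMeasure μ]
    (hsupp : μ ((Set.Icc (0:ℝ) 1)ᶜ) = 0)
    (hmono : MonotonicMeasure μ)
    (a a' b b' : ℝ) (ha : a < a') (hb : b < b')
    (hA : Set.Icc a a' ⊆ Set.Icc 0 1) (hB : Set.Icc b b' ⊆ Set.Icc 0 1)
    (hinf : a ≤ b) (hsup : a' ≤ b') :
    μ (Set.Icc b b') / volume (Set.Icc b b') ≤
      μ (Set.Icc a a') / volume (Set.Icc a a') := by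
  have ha0 : 0 ≤ a := (hA (Set.left_mem_Icc.mpr ha.le)).1
  have ha1 : a' ≤ 1 := (hA (Set.right_mem_Icc.mpr ha.le)).2
  have hb0 : 0 ≤ b := (hB (Set.left_mem_Icc.mpr hb.le)).1
  have hb1 : b' ≤ 1 := (hB (Set.right_mem_Icc.mpr hb.le)).2
  have hL : (0:ℝ) < a' - a := by linarith
  have hl : (0:ℝ) < b' - b := by linarith
  have key : ∀ n : ℕ, 0 < n →
      μ (Icc b b') * ENNReal.ofReal (a' - a) ≤
      μ (Icc a a') * ENNReal.ofReal (b' - b) + ENNReal.ofReal ((a' - a) / n) := by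
    intro n hn
    set h : ℝ := (a' - a) / n with hh_def
    have hn' : (0:ℝ) < n := Nat.cast_pos.mpr hn
    have hh : 0 < h := div_pos hL hn'
    have hnh : (n:ℝ) * h = a' - a := by rw [hh_def]; field_simp
    set m : ℕ := ⌈(b' - b) / h⌉₊ with hm_def
    have hm : 0 < m := Nat.ceil_pos.mpr (div_pos hl hh)
    have hmh : b' - b ≤ m * h := by
      rw [← div_le_iff₀ hh]
      exact Nat.le_ceil _
    have hmh' : (m:ℝ) * h < (b' - b) + h := by
      have h1 : (m:ℝ) < (b' - b)/h + 1 := Nat.ceil_lt_add_one (le_of_lt (div_pos hl hh))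
      have h2 : ((b' - b)/h) * h = b' - b := by field_simp
      nlinarith
    set d : ℕ → ENNReal := fun j => μ (Icc (a + j*h) (a + j*h + h)) with hd_def
    set e : ℕ → ENNReal := fun k => μ (Icc (b + k*h) (b + k*h + h)) with he_def
    -- d is antitone on range n
    have hd : ∀ i j, i ≤ j → j < n → d j ≤ d i := by
      intro i j hij hjn
      apply shift_le μ hsupp hmono
      · positivity
      · have hc : (i:ℝ) + 1 ≤ n := by exact_mod_cast Nat.succ_le_of_lt (lt_of_le_of_lt hij hjn)
        nlinarith [mul_le_mul_of_nonneg_right hc hh.le]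
      · have hc : (i:ℝ) ≤ j := Nat.cast_le.mpr hij
        nlinarith [mul_le_mul_of_nonneg_right hc hh.le]
      · have h1 : (j:ℝ) ≤ n := Nat.cast_le.mpr hjn.le
        have h2 : (j:ℝ)*h ≤ (n:ℝ)*h := by nlinarith
        have h3 : (0:ℝ) ≤ (i:ℝ)*h := by positivity
        linarith
    have hcross : ∀ j k, j < n → k < m → j + m ≤ k + n ∨ j ≤ k → e k ≤ d j := by
      intro j k hjn hkm hor
      have hjn' : (j:ℝ) + 1 ≤ n := by exact_mod_cast Nat.succ_le_of_lt hjn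
      have hkm' : (k:ℝ) + 1 ≤ m := by exact_mod_cast Nat.succ_le_of_lt hkm
      have htb : b + (k:ℝ)*h ≤ b' := by
        nlinarith [mul_le_mul_of_nonneg_right hkm' hh.le]
      apply shift_le μ hsupp hmono
      · positivity
      · nlinarith [mul_le_mul_of_nonneg_right hjn' hh.le]
      · rcases hor with hcase | hcase
        · have hc : (j:ℝ) + m ≤ (k:ℝ) + n := by exact_mod_cast hcase
          nlinarith [mul_le_mul_of_nonneg_right hc hh.le]
        · have hc : (j:ℝ) ≤ k := Nat.cast_le.mpr hcase
          nlinarith [mul_le_mul_of_nonneg_right hc hh.le]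
      · have : (0:ℝ) ≤ (j:ℝ)*h := by positivity
        linarith
    have hA_eq : μ (Icc a a') = ∑ j ∈ Finset.range n, d j := by
      have ea' : a' = a + n*h := by linarith [hnh]
      rw [Icc_eq_Ico_meas μ hsupp hmono ha.le (lt_of_le_of_lt ha0 ha) ha1, ea',
        part_sum μ a h hh.le n]
      refine Finset.sum_congr rfl fun j hj => ?_
      have hjn : j < n := Finset.mem_range.mp hj
      have hjn' : (j:ℝ) + 1 ≤ n := by exact_mod_cast Nat.succ_le_of_lt hjn
      refine (Icc_eq_Ico_meas μ hsupp hmono (by linarith) (by positivity) ?_).symm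
      nlinarith
    have hB_le : μ (Icc b b') ≤ ∑ k ∈ Finset.range m, e k := by
      have hsub : Icc b b' ⊆ Icc b (b + m*h) := Set.Icc_subset_Icc le_rfl (by linarith)
      exact le_trans (measure_mono hsub) (cover_sum μ b h hh.le m hm)
    have hcount := counting hn hm hd hcross
    have hmain : (n : ENNReal) * μ (Icc b b') ≤ (m : ENNReal) * μ (Icc a a') := by
      rw [hA_eq]
      exact le_trans (by gcongr) hcount
    -- assemble
    have hofn : ENNReal.ofReal (a' - a) = (n : ENNReal) * ENNReal.ofReal h := by
      rw [← hnh, ENNReal.ofReal_mul (by positivity), ENNReal.ofReal_natCast]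
    calc μ (Icc b b') * ENNReal.ofReal (a' - a)
        = ((n : ENNReal) * μ (Icc b b')) * ENNReal.ofReal h := by rw [hofn]; ring
      _ ≤ ((m : ENNReal) * μ (Icc a a')) * ENNReal.ofReal h := by gcongr
      _ = μ (Icc a a') * ((m : ENNReal) * ENNReal.ofReal h) := by ring
      _ = μ (Icc a a') * ENNReal.ofReal ((m:ℝ) * h) := by
          rw [ENNReal.ofReal_mul (by positivity), ENNReal.ofReal_natCast]
      _ ≤ μ (Icc a a') * ENNReal.ofReal ((b' - b) + h) := by
          gcongr
      _ = μ (Icc a a') * ENNReal.ofReal (b' - b) + μ (Icc a a') * ENNReal.ofReal h := by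
          rw [ENNReal.ofReal_add hl.le hh.le, mul_add]
      _ ≤ μ (Icc a a') * ENNReal.ofReal (b' - b) + 1 * ENNReal.ofReal h := by
          gcongr
          exact prob_le_one
      _ = μ (Icc a a') * ENNReal.ofReal (b' - b) + ENNReal.ofReal ((a' - a)/n) := by
          rw [one_mul]
  have main : μ (Icc b b') * ENNReal.ofReal (a' - a) ≤
      μ (Icc a a') * ENNReal.ofReal (b' - b) := by
    apply ENNReal.le_of_forall_pos_le_add
    intro ε hε _
    have hε' : (0:ℝ) < ε := by exact_mod_cast hε
    obtain ⟨n, hn⟩ := exists_nat_gt ((a' - a)/ε)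
    have hn' : (0:ℝ) < n := lt_trans (div_pos hL hε') hn
    have hn0 : 0 < n := Nat.cast_pos.mp hn'
    refine le_trans (key n hn0) ?_
    gcongr
    have : (a' - a)/n < ε := by
      rw [div_lt_iff₀ hn']
      have h2 : ((a'-a)/ε) * ε = a' - a := by field_simp
      nlinarith [mul_lt_mul_of_pos_right hn hε']
    calc ENNReal.ofReal ((a' - a)/n) ≤ ENNReal.ofReal (ε:ℝ) := ENNReal.ofReal_le_ofReal this.le
      _ = (ε : ENNReal) := ENNReal.ofReal_coe_nnreal
  rw [Real.volume_Icc, Real.volume_Icc]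
  have hP0 : ENNReal.ofReal (a' - a) ≠ 0 := by
    rw [Ne, ENNReal.ofReal_eq_zero, not_le]; linarith
  have hPt : ENNReal.ofReal (a' - a) ≠ ⊤ := ENNReal.ofReal_ne_top
  have hQ0 : ENNReal.ofReal (b' - b) ≠ 0 := by
    rw [Ne, ENNReal.ofReal_eq_zero, not_le]; linarith
  have hQt : ENNReal.ofReal (b' - b) ≠ ⊤ := ENNReal.ofReal_ne_top
  rw [ENNReal.div_le_iff_le_mul (Or.inl hQ0) (Or.inl hQt)]
  have step : μ (Icc b b') ≤ μ (Icc a a') * ENNReal.ofReal (b' - b) / ENNReal.ofReal (a' - a) :=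
    (ENNReal.le_div_iff_mul_le (Or.inl hP0) (Or.inl hPt)).mpr main
  refine le_trans step (le_of_eq ?_)
  rw [div_eq_mul_inv, div_eq_mul_inv, mul_right_comm]
end

section
/- Let Δ = {Δ_i} be a finite partition of [0,1] into intervals of positive length, ordered left to right, and let μ be a monotonic probability measure. Then the piecewise constant density of Q_Δ μ, whose value on Δ_i is μ(Δ_i)/m(Δ_i), is non-increasing in i: μ(Δ_i)/m(Δ_i) ≥ μ(Δ_j)/m(Δ_j) whenever i < j. -/
open MeasureTheory Set Filter Topology
open scoped ENNReal

/-- Cells of a partition of `[0,1]` into intervals determined by endpoints `t 0 < t 1 < … < t N`: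
the first cell is closed, the others are left-open, so they are pairwise disjoint and cover `[0,1]`. -/
def cellOf {N : ℕ} (t : Fin (N+1) → ℝ) (i : Fin N) : Set ℝ :=
  if i.val = 0 then Set.Icc (t i.castSucc) (t i.succ) else Set.Ioc (t i.castSucc) (t i.succ)

lemma transB {μ : Measure ℝ} (hμ : MonotonicMeasure μ) {a l x : ℝ} (ha : 0 ≤ a) (hl : 0 ≤ l)
    (hx0 : 0 ≤ x) (h1 : a + l + x ≤ 1) :
    μ (Set.Icc (a + x) (a + l + x)) ≤ μ (Set.Icc a (a + l)) := by
  have hx1 : x ≤ 1 := by linarith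
  have hsub : Icc a (a + l) ⊆ Icc 0 1 := Icc_subset_Icc ha (by linarith)
  have h := hμ a (a + l) hsub x ⟨hx0, hx1⟩
  have himg : (fun y => y + x) '' Icc a (a + l) = Icc (a + x) (a + l + x) :=
    Set.image_add_const_Icc x a (a + l)
  rw [himg] at h
  have heq : Icc (a + x) (a + l + x) ∩ Icc 0 1 = Icc (a + x) (a + l + x) :=
    inter_eq_left.mpr (Icc_subset_Icc (by linarith) (by linarith))
  rwa [heq] at h

lemma atomless {μ : Measure ℝ} [IsProbabilityMeasure μ] (hμ : MonotonicMeasure μ) {p : ℝ}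
    (hp0 : 0 < p) (hp1 : p ≤ 1) : μ {p} = 0 := by
  by_contra h
  have hpos : ∀ q ∈ Icc (0:ℝ) p, 0 < μ {q} := by
    intro q hq
    have h2 := transB hμ (a := q) (l := 0) (x := p - q) hq.1 le_rfl (by linarith [hq.2]) (by linarith)
    have e1 : q + (p - q) = p := by ring
    have e2 : q + 0 + (p - q) = p := by ring
    have e3 : q + 0 = q := by ring
    rw [e1, e2, e3, Icc_self, Icc_self] at h2
    exact lt_of_lt_of_le (pos_iff_ne_zero.mpr h) h2
  have hcnt := MeasureTheory.Measure.countable_meas_pos_of_disjoint_iUnion (μ := μ)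
    (As := fun q : ℝ => {q}) (fun q => measurableSet_singleton q)
    (fun q q' hqq => by simp [Function.onFun, Set.disjoint_singleton, hqq])
  have hsub : Set.Icc (0:ℝ) p ⊆ {q : ℝ | 0 < μ {q}} := fun q hq => hpos q hq
  have hc : (Set.Icc (0:ℝ) p).Countable := hcnt.mono hsub
  have := hc.to_subtype
  have h1 : (Cardinal.mk (Set.Icc (0:ℝ) p)) ≤ Cardinal.aleph0 := Cardinal.mk_le_aleph0
  rw [Cardinal.mk_Icc_real hp0] at h1
  exact absurd h1 (not_le.mpr Cardinal.aleph0_lt_continuum)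


lemma lowerB {μ : Measure ℝ} [IsProbabilityMeasure μ] (hμ : MonotonicMeasure μ)
    {a li b h : ℝ} (ha : 0 ≤ a) (hh : 0 < h) (hab : a + li ≤ b) (hbh : b + h ≤ 1)
    {n : ℕ} (hn : 0 < n) (hnh : (n:ℝ) * h = li) :
    (n : ℝ≥0∞) * μ (Icc b (b + h)) ≤ μ (Icc a (a + li)) := by
  have hb1 : b ≤ 1 := by linarith
  have hli : 0 < li := by
    rw [← hnh]; positivity
  have claim : ∀ r : ℕ, 1 ≤ r → r ≤ n →
      (r : ℝ≥0∞) * μ (Icc b (b + h)) ≤ μ (Icc a (a + (r:ℝ) * h)) := by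
    intro r hr1 hrn
    induction r with
    | zero => omega
    | succ r ih =>
      push_cast
      have hrh : (r:ℝ) * h + h ≤ li := by
        rw [← hnh]
        have : ((r:ℝ) + 1) ≤ (n:ℝ) := by exact_mod_cast hrn
        nlinarith
      -- the translated small interval
      have hstep : μ (Icc b (b + h)) ≤ μ (Icc (a + (r:ℝ)*h) (a + (r:ℝ)*h + h)) := by
        have hx0 : (0:ℝ) ≤ b - (a + (r:ℝ)*h) := by nlinarith [hr1, hh.le]
        have := transB hμ (a := a + (r:ℝ)*h) (l := h) (x := b - (a + (r:ℝ)*h))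
          (by positivity) hh.le hx0 (by linarith)
        have e1 : a + (r:ℝ)*h + (b - (a + (r:ℝ)*h)) = b := by ring
        have e2 : a + (r:ℝ)*h + h + (b - (a + (r:ℝ)*h)) = b + h := by ring
        rwa [e1, e2] at this
      rcases Nat.eq_or_lt_of_le hr1 with h1 | h1
      · -- r + 1 = 1, i.e. r = 0
        have hr0 : r = 0 := by omega
        subst hr0
        simpa using hstep
      · -- r ≥ 1
        have hr1' : 1 ≤ r := by omega
        have ih' := ih hr1' (by omega)
        have hpt : μ {a + (r:ℝ)*h} = 0 := by
          apply atomless hμ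
          · have : (1:ℝ) ≤ (r:ℝ) := by exact_mod_cast hr1'
            nlinarith
          · nlinarith
        have hIoc : μ (Icc b (b + h)) ≤ μ (Ioc (a + (r:ℝ)*h) (a + (r:ℝ)*h + h)) := by
          have hins : insert (a + (r:ℝ)*h) (Ioc (a + (r:ℝ)*h) (a + (r:ℝ)*h + h))
              = Icc (a + (r:ℝ)*h) (a + (r:ℝ)*h + h) := Set.Ioc_insert_left (by linarith)
          have hle : μ (Icc (a + (r:ℝ)*h) (a + (r:ℝ)*h + h))
              ≤ μ {a + (r:ℝ)*h} + μ (Ioc (a + (r:ℝ)*h) (a + (r:ℝ)*h + h)) := by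
            rw [← hins, Set.insert_eq]; exact measure_union_le _ _
          rw [hpt, zero_add] at hle
          exact hstep.trans hle
        have hsplit : μ (Icc a (a + ((r:ℝ)+1) * h))
            = μ (Icc a (a + (r:ℝ)*h)) + μ (Ioc (a + (r:ℝ)*h) (a + (r:ℝ)*h + h)) := by
          have hu : Icc a (a + (r:ℝ)*h) ∪ Ioc (a + (r:ℝ)*h) (a + (r:ℝ)*h + h)
              = Icc a (a + ((r:ℝ)+1) * h) := by
            rw [Icc_union_Ioc_eq_Icc (by nlinarith) (by linarith)]
            ring_nf
          rw [← hu]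
          exact measure_union
            ((Set.Iic_disjoint_Ioc le_rfl).mono_left Set.Icc_subset_Iic_self)
            measurableSet_Ioc
        calc ((r:ℝ≥0∞) + 1) * μ (Icc b (b + h))
            = (r:ℝ≥0∞) * μ (Icc b (b + h)) + μ (Icc b (b + h)) := by ring
          _ ≤ μ (Icc a (a + (r:ℝ)*h)) + μ (Ioc (a + (r:ℝ)*h) (a + (r:ℝ)*h + h)) :=
              add_le_add ih' hIoc
          _ = μ (Icc a (a + ((r:ℝ)+1) * h)) := hsplit.symm
  have := claim n hn le_rfl
  rw [hnh] at this
  exact_mod_cast this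

lemma upperB {μ : Measure ℝ} (hμ : MonotonicMeasure μ)
    {b lj g : ℝ} (hb : 0 ≤ b) (hg : 0 < g) (hb1 : b + lj ≤ 1)
    {m : ℕ} (hm : 0 < m) (hmg : (m:ℝ) * g = lj) :
    μ (Ioc b (b + lj)) ≤ (m : ℝ≥0∞) * μ (Icc b (b + g)) := by
  have claim : ∀ k : ℕ, k ≤ m →
      μ (Ioc b (b + (k:ℝ) * g)) ≤ (k : ℝ≥0∞) * μ (Icc b (b + g)) := by
    intro k hk
    induction k with
    | zero => simp
    | succ k ih =>
      push_cast
      have ih' := ih (by omega)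
      have hkg : ((k:ℝ)+1) * g ≤ lj := by
        rw [← hmg]
        have : ((k:ℝ) + 1) ≤ (m:ℝ) := by exact_mod_cast hk
        nlinarith
      have hsplit : Ioc b (b + ((k:ℝ)+1) * g)
          = Ioc b (b + (k:ℝ)*g) ∪ Ioc (b + (k:ℝ)*g) (b + (k:ℝ)*g + g) := by
        rw [Ioc_union_Ioc_eq_Ioc (by nlinarith) (by linarith)]
        ring_nf
      have hpiece : μ (Ioc (b + (k:ℝ)*g) (b + (k:ℝ)*g + g)) ≤ μ (Icc b (b + g)) := by
        have := transB hμ (a := b) (l := g) (x := (k:ℝ)*g) hb hg.le (by positivity)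
          (by nlinarith)
        have e1 : b + (k:ℝ)*g = b + (k:ℝ)*g := rfl
        calc μ (Ioc (b + (k:ℝ)*g) (b + (k:ℝ)*g + g))
            ≤ μ (Icc (b + (k:ℝ)*g) (b + (k:ℝ)*g + g)) := measure_mono Ioc_subset_Icc_self
          _ = μ (Icc (b + (k:ℝ)*g) (b + g + (k:ℝ)*g)) := by ring_nf
          _ ≤ μ (Icc b (b + g)) := this
      calc μ (Ioc b (b + ((k:ℝ)+1) * g))
          ≤ μ (Ioc b (b + (k:ℝ)*g)) + μ (Ioc (b + (k:ℝ)*g) (b + (k:ℝ)*g + g)) := by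
            rw [hsplit]; exact measure_union_le _ _
        _ ≤ (k : ℝ≥0∞) * μ (Icc b (b + g)) + μ (Icc b (b + g)) := add_le_add ih' hpiece
        _ = ((k:ℝ≥0∞) + 1) * μ (Icc b (b + g)) := by ring
  have := claim m le_rfl
  rw [hmg] at this
  exact_mod_cast this


lemma keyB {μ : Measure ℝ} [IsProbabilityMeasure μ] (hμ : MonotonicMeasure μ)
    {a li b lj : ℝ} (ha : 0 ≤ a) (hli : 0 < li) (hlj : 0 < lj)
    (hab : a + li ≤ b) (hb1 : b + lj ≤ 1) (hblt : b < 1) :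
    μ (Ioc b (b + lj)) * ENNReal.ofReal li ≤ μ (Icc a (a + li)) * ENNReal.ofReal lj := by
  set J := (μ (Ioc b (b + lj))).toReal with hJ
  set I := (μ (Icc a (a + li))).toReal with hI
  have hI0 : 0 ≤ I := ENNReal.toReal_nonneg
  have hJ0 : 0 ≤ J := ENNReal.toReal_nonneg
  have hfin1 : μ (Ioc b (b + lj)) ≠ ⊤ := measure_ne_top μ _
  have hfin2 : μ (Icc a (a + li)) ≠ ⊤ := measure_ne_top μ _
  have main : ∀ n : ℕ, 0 < n → b + li / n ≤ 1 →
      J * li ≤ lj * I + li * I / n := by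
    intro n hn hbn
    have hn' : (0:ℝ) < n := by exact_mod_cast hn
    set h := li / n with hh
    have hhpos : 0 < h := by positivity
    set m := ⌈(n:ℝ) * lj / li⌉₊ with hm
    have hmR : (n:ℝ) * lj / li ≤ (m:ℝ) := Nat.le_ceil _
    have hmpos : 0 < m := by
      rw [hm]; apply Nat.ceil_pos.mpr; positivity
    have hm' : (0:ℝ) < m := by exact_mod_cast hmpos
    set g := lj / m with hg
    have hgpos : 0 < g := by positivity
    have hgh : g ≤ h := by
      rw [hg, hh, div_le_div_iff₀ hm' hn']
      have h2 : (n:ℝ) * lj ≤ (m:ℝ) * li := by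
        have := (div_le_iff₀ hli).mp hmR
        linarith
      linarith
    have hup := upperB hμ (b := b) (lj := lj) (g := g)
      (le_trans ha (by linarith)) hgpos hb1 hmpos (by rw [hg]; field_simp)
    have hlow := lowerB hμ (a := a) (li := li) (b := b) (h := h) ha hhpos hab hbn hn
      (by rw [hh]; field_simp)
    have hcomb : (n:ℝ≥0∞) * μ (Ioc b (b + lj)) ≤ (m:ℝ≥0∞) * μ (Icc a (a + li)) := by
      calc (n:ℝ≥0∞) * μ (Ioc b (b + lj))
          ≤ (n:ℝ≥0∞) * ((m:ℝ≥0∞) * μ (Icc b (b + g))) := mul_le_mul_right hup _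
        _ = (m:ℝ≥0∞) * ((n:ℝ≥0∞) * μ (Icc b (b + g))) := by ring
        _ ≤ (m:ℝ≥0∞) * ((n:ℝ≥0∞) * μ (Icc b (b + h))) :=
            mul_le_mul_right (mul_le_mul_right
              (measure_mono (Icc_subset_Icc le_rfl (by linarith))) _) _
        _ ≤ (m:ℝ≥0∞) * μ (Icc a (a + li)) := mul_le_mul_right hlow _
    have hreal : (n:ℝ) * J ≤ (m:ℝ) * I := by
      have h3 := ENNReal.toReal_mono (by finiteness) hcomb
      simpa [ENNReal.toReal_mul, hJ, hI] using h3
    have hmle : (m:ℝ) ≤ (n:ℝ) * lj / li + 1 :=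
      le_of_lt (Nat.ceil_lt_add_one (by positivity))
    have key_lin : (n:ℝ) * (J * li) ≤ (n:ℝ) * (lj * I) + li * I := by
      have h2 : (n:ℝ) * J ≤ ((n:ℝ) * lj / li + 1) * I := le_trans hreal (by nlinarith)
      have h3 : (n:ℝ) * J * li ≤ ((n:ℝ) * lj / li + 1) * I * li := by nlinarith
      have h4 : ((n:ℝ) * lj / li + 1) * I * li = (n:ℝ) * (lj * I) + li * I := by
        field_simp
      nlinarith [h3, h4]
    have h4 : J * li ≤ ((n:ℝ) * (lj * I) + li * I) / n :=
      (le_div_iff₀ hn').mpr (by nlinarith)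
    have h5 : ((n:ℝ) * (lj * I) + li * I) / n = lj * I + li * I / n := by
      field_simp
    linarith [h4, h5.symm.le, h5.le]
  have hfinal : J * li ≤ lj * I := by
    have hlim : Tendsto (fun n : ℕ => lj * I + li * I / n) atTop (𝓝 (lj * I + 0)) :=
      tendsto_const_nhds.add (tendsto_const_div_atTop_nhds_zero_nat (li * I))
    rw [add_zero] at hlim
    apply ge_of_tendsto hlim
    have hb' : 0 < 1 - b := by linarith
    filter_upwards [Filter.eventually_ge_atTop (max 1 ⌈li / (1 - b)⌉₊)] with n hn
    have hn1 : 1 ≤ n := le_trans (le_max_left _ _) hn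
    have hn' : (0:ℝ) < n := by exact_mod_cast hn1
    have hn2 : li / (1 - b) ≤ (n:ℝ) := by
      refine le_trans (Nat.le_ceil _) ?_
      exact_mod_cast le_trans (le_max_right 1 _) hn
    apply main n (by omega)
    rw [div_le_iff₀ hb'] at hn2
    rw [← sub_nonneg]
    have : li / n ≤ 1 - b := by
      rw [div_le_iff₀ hn']
      nlinarith
    linarith
  have e1 : μ (Ioc b (b + lj)) = ENNReal.ofReal J := (ENNReal.ofReal_toReal hfin1).symm
  have e2 : μ (Icc a (a + li)) = ENNReal.ofReal I := (ENNReal.ofReal_toReal hfin2).symm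
  rw [e1, e2, ← ENNReal.ofReal_mul hJ0, ← ENNReal.ofReal_mul hI0]
  exact ENNReal.ofReal_le_ofReal (by nlinarith)


lemma div_le_div_aux {x y p q : ℝ≥0∞} (hp0 : p ≠ 0) (hpt : p ≠ ⊤) (hq0 : q ≠ 0) (hqt : q ≠ ⊤)
    (h : x * p ≤ y * q) : x / q ≤ y / p := by
  rw [ENNReal.div_le_iff hq0 hqt]
  have e : y / p * q = y * q / p := by
    rw [div_eq_mul_inv, div_eq_mul_inv, mul_right_comm]
  rw [e, ENNReal.le_div_iff_mul_le (Or.inl hp0) (Or.inl hpt)]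
  exact h

theorem stmt7 {N : ℕ} (hN : 0 < N) (t : Fin (N+1) → ℝ) (htmono : StrictMono t)
    (ht0 : t 0 = 0) (ht1 : t (Fin.last N) = 1)
    (μ : Measure ℝ) [IsProbabilityMeasure μ]
    (hsupp : μ ((Set.Icc (0:ℝ) 1)ᶜ) = 0)
    (hμ : MonotonicMeasure μ)
    (i j : Fin N) (hij : i < j) :
    μ (cellOf t j) / volume (cellOf t j) ≤ μ (cellOf t i) / volume (cellOf t i) := by
  set a := t i.castSucc with hadef
  set b := t j.castSucc with hbdef
  set li := t i.succ - a with hlidef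
  set lj := t j.succ - b with hljdef
  have hmono := htmono.monotone
  have ha : 0 ≤ a := by
    rw [← ht0]; exact hmono (Fin.zero_le _)
  have hli : 0 < li := sub_pos.mpr (htmono (Fin.castSucc_lt_succ : i.castSucc < i.succ))
  have hlj : 0 < lj := sub_pos.mpr (htmono (Fin.castSucc_lt_succ : j.castSucc < j.succ))
  have hab : a + li ≤ b := by
    have : t i.succ ≤ t j.castSucc := by
      apply hmono
      rw [Fin.le_def]
      simp only [Fin.val_succ, Fin.coe_castSucc]
      exact hij
    simpa [hlidef] using this
  have hb1 : b + lj ≤ 1 := by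
    have : t j.succ ≤ t (Fin.last N) := hmono (Fin.le_last _)
    rw [ht1] at this
    simpa [hljdef] using this
  have hblt : b < 1 := by
    rw [← ht1]
    apply htmono
    rw [Fin.lt_def]
    simpa using j.isLt
  have hjne : j.val ≠ 0 := by
    have : i.val < j.val := hij
    omega
  have hcellj : cellOf t j = Ioc b (b + lj) := by
    rw [cellOf, if_neg hjne, hbdef]
    congr 1
    rw [hljdef]; ring
  have hb0 : 0 < b := by
    rw [← ht0]
    apply htmono
    rw [Fin.lt_def]
    simp only [Fin.val_zero, Fin.coe_castSucc]
    omega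
  have hIccIoc : ∀ p q : ℝ, 0 < p → p ≤ 1 → μ (Icc p q) = μ (Ioc p q) := by
    intro p q hp hp1
    refine le_antisymm ?_ (measure_mono Ioc_subset_Icc_self)
    rcases le_or_gt p q with hpq | hpq
    · have hins : insert p (Ioc p q) = Icc p q := Ioc_insert_left hpq
      have hle : μ (Icc p q) ≤ μ {p} + μ (Ioc p q) := by
        rw [← hins, Set.insert_eq]; exact measure_union_le _ _
      rwa [atomless hμ hp hp1, zero_add] at hle
    · rw [Icc_eq_empty (not_le.mpr hpq), Ioc_eq_empty (not_lt.mpr hpq.le)]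
  have hcelli : μ (cellOf t i) = μ (Icc a (a + li)) := by
    have he : a + li = t i.succ := by rw [hlidef]; ring
    rw [cellOf]
    split_ifs with hi
    · rw [he, hadef]
    · rw [he, hadef]
      have ha0 : 0 < a := by
        rw [← ht0]
        apply htmono
        rw [Fin.lt_def]
        simp only [Fin.val_zero, Fin.coe_castSucc]
        omega
      have ha1 : a ≤ 1 := by
        rw [← ht1]; exact hmono (Fin.le_last _)
      rw [hIccIoc a (t i.succ) ha0 ha1, hadef]
  have hvoli : volume (cellOf t i) = ENNReal.ofReal li := by
    rw [cellOf]
    split_ifs with hi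
    · rw [Real.volume_Icc]
    · rw [Real.volume_Ioc]
  have hkey := keyB hμ ha hli hlj hab hb1 hblt
  rw [hcellj, hcelli, hvoli, Real.volume_Ioc, show b + lj - b = lj by ring]
  exact div_le_div_aux (by simp [hli]) ENNReal.ofReal_ne_top
    (by simp [hlj]) ENNReal.ofReal_ne_top hkey
end

section
/- Let G : [0,c] → [0,1] be a concave continuous map with G(0) = 0, and let μ be a monotonic probability measure on [0,1]. For any two intervals A, B ⊆ [0,c] with inf A ≤ inf B, sup A ≤ sup B, and m(A) = m(B), one has μ(G(A)) ≥ μ(G(B)). -/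
open MeasureTheory Set

theorem stmt9 (c : ℝ) (hc : 0 < c) (hc1 : c ≤ 1) (G : ℝ → ℝ)
    (hconc : ConcaveOn ℝ (Set.Icc 0 c) G) (hcont : ContinuousOn G (Set.Icc 0 c))
    (hG0 : G 0 = 0) (hmaps : Set.MapsTo G (Set.Icc 0 c) (Set.Icc 0 1))
    (hGmono : MonotoneOn G (Set.Icc 0 c))
    (μ : Measure ℝ) [IsProbabilityMeasure μ]
    (hsupp : μ ((Set.Icc (0:ℝ) 1)ᶜ) = 0)
    (hμ : MonotonicMeasure μ)
    (a a' b b' : ℝ) (haa : a ≤ a') (hbb : b ≤ b')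
    (hA : Set.Icc a a' ⊆ Set.Icc 0 c) (hB : Set.Icc b b' ⊆ Set.Icc 0 c)
    (hinf : a ≤ b) (hsup : a' ≤ b') (hlen : a' - a = b' - b) :
    μ (G '' Set.Icc b b') ≤ μ (G '' Set.Icc a a') := by
  have haA : a ∈ Set.Icc 0 c := hA ⟨le_refl a, haa⟩
  have ha'A : a' ∈ Set.Icc 0 c := hA ⟨haa, le_refl a'⟩
  have hbB : b ∈ Set.Icc 0 c := hB ⟨le_refl b, hbb⟩
  have hb'B : b' ∈ Set.Icc 0 c := hB ⟨hbb, le_refl b'⟩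
  -- images are intervals
  have himA : G '' Set.Icc a a' = Set.Icc (G a) (G a') := by
    apply Subset.antisymm
    · rintro _ ⟨z, hz, rfl⟩
      exact ⟨hGmono haA (hA hz) hz.1, hGmono (hA hz) ha'A hz.2⟩
    · exact intermediate_value_Icc haa (hcont.mono hA)
  have himB : G '' Set.Icc b b' = Set.Icc (G b) (G b') := by
    apply Subset.antisymm
    · rintro _ ⟨z, hz, rfl⟩
      exact ⟨hGmono hbB (hB hz) hz.1, hGmono (hB hz) hb'B hz.2⟩
    · exact intermediate_value_Icc hbb (hcont.mono hB)
  -- concavity: G b + G a' ≥ G a + G b'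
  have key : G a + G b' ≤ G b + G a' := by
    rcases eq_or_lt_of_le (hinf.trans hbb) with heq | hab'
    · -- a = b', so all points coincide
      have h1 : a = b := le_antisymm hinf (hbb.trans heq.symm.le)
      have h2 : a' = b' := le_antisymm hsup (heq.symm.le.trans haa)
      rw [h1, h2]
    · set l : ℝ := (b' - b) / (b' - a) with hl
      have hd : (0:ℝ) < b' - a := by linarith
      have hl0 : 0 ≤ l := div_nonneg (by linarith) hd.le
      have hl1 : l ≤ 1 := (div_le_one hd).2 (by linarith)
      have hsum : l + (1 - l) = 1 := by ring
      have hb_eq : l * a + (1 - l) * b' = b := by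
        field_simp [hl]
        have h := div_mul_cancel₀ (b' - b) hd.ne'
        rw [← hl] at h
        linear_combination -h
      have ha'_eq : (1 - l) * a + l * b' = a' := by
        have : a' = a + (b' - b) := by linarith
        rw [this]
        field_simp [hl]
        have h := div_mul_cancel₀ (b' - b) hd.ne'
        rw [← hl] at h
        linear_combination h
      have h1 := hconc.2 haA hb'B hl0 (by linarith) hsum
      have h2 := hconc.2 haA hb'B (by linarith : (0:ℝ) ≤ 1 - l) hl0 (by ring)
      simp only [smul_eq_mul] at h1 h2
      rw [hb_eq] at h1
      rw [ha'_eq] at h2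
      linarith
  set x : ℝ := G b' - G a' with hx
  have hx0 : 0 ≤ x := by
    have := hGmono ha'A hb'B hsup
    simpa [hx] using this
  have hGa := hmaps haA
  have hGa' := hmaps ha'A
  have hGb' := hmaps hb'B
  have hx1 : x ≤ 1 := by
    have := hGa'.1; have := hGb'.2; simp only [hx]; linarith
  have hsubA : Set.Icc (G a) (G a') ⊆ Set.Icc 0 1 := by
    intro y hy; exact ⟨hGa.1.trans hy.1, hy.2.trans hGa'.2⟩
  have hsub : G '' Set.Icc b b' ⊆
      (fun y => y + x) '' Set.Icc (G a) (G a') ∩ Set.Icc 0 1 := by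
    rw [himB]
    intro y hy
    refine ⟨⟨y - x, ⟨?_, ?_⟩, by ring⟩, ?_⟩
    · have : G a + x ≤ G b := by simp only [hx]; linarith
      linarith [hy.1]
    · have : G b' = G a' + x := by simp [hx]
      linarith [hy.2]
    · constructor
      · have := (hmaps hbB).1; linarith [hy.1]
      · have := hGb'.2; linarith [hy.2]
  calc μ (G '' Set.Icc b b') ≤
      μ ((fun y => y + x) '' Set.Icc (G a) (G a') ∩ Set.Icc 0 1) :=
        measure_mono hsub
    _ ≤ μ (Set.Icc (G a) (G a')) := hμ (G a) (G a') hsubA x ⟨hx0, hx1⟩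
    _ = μ (G '' Set.Icc a a') := by rw [himA]
end
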